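/- arXiv:1907.09431 — 3 statements merged into one kernel-verified Lean document; each statement's English description precedes it below -/
import Mathlib

section
/- There is a constant C depending only on K and a such that η(𝔮;a) ≤ C · 2^{ω_K(𝔮)} for all nonzero ideals 𝔮 of O_K. -/
open NumberField

noncomputable section

namespace ManinSplitTorsor

variable {K : Type*} [Field K] [NumberField K]

/-- The ideal `𝔤′` with `v_p(𝔤′) = ⌈v_p(𝔤)/2⌉` for all primes `p`:
the largest ideal whose square is divisible by `g`. -/
def sqrtCeil (g : Ideal (𝓞 K)) : Ideal (𝓞 K) :=
  sSup {J : Ideal (𝓞 K) | g ∣ J ^ 2}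

/-- The ideal `𝔮 𝔤⁻¹ 𝔤′` where `𝔤 = 𝔮 + aO_K`. -/
def etaMod (a : 𝓞 K) (q : Ideal (𝓞 K)) : Ideal (𝓞 K) :=
  sSup {J : Ideal (𝓞 K) |
    q * sqrtCeil (q + Ideal.span {a}) ∣ J * (q + Ideal.span {a})}

/-- `η(𝔮; a)`: the number of `ρ (mod 𝔮𝔤⁻¹𝔤′)` with `ρ O_K + 𝔮𝔤⁻¹𝔤′ = 𝔤′` and
`ρ² ≡ a (mod 𝔮)`. -/
def eta (a : 𝓞 K) (q : Ideal (𝓞 K)) : ℕ :=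
  Nat.card {ρ : 𝓞 K ⧸ etaMod a q //
    ∃ r : 𝓞 K, Ideal.Quotient.mk (etaMod a q) r = ρ ∧
      Ideal.span {r} + etaMod a q = sqrtCeil (q + Ideal.span {a}) ∧
      r ^ 2 - a ∈ q}

open Classical in
/-- `v_p(𝔮)`, the exponent of the prime `p` in the factorization of the ideal `𝔮`. -/
def vP (p q : Ideal (𝓞 K)) : ℕ :=
  (UniqueFactorizationMonoid.normalizedFactors q).count p

/-- `v_p(a)` for an element `a` of the ring of integers. -/
def vE (p : Ideal (𝓞 K)) (a : 𝓞 K) : ℕ := vP p (Ideal.span {a})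

open Classical in
/-- `ω_K(𝔮)`, the number of distinct prime ideals dividing `𝔮`. -/
def omegaK (q : Ideal (𝓞 K)) : ℕ :=
  (UniqueFactorizationMonoid.normalizedFactors q).toFinset.card

open Classical in
/-- The Legendre symbol `(a|p)`: `1` if `a` is a quadratic residue mod `p`, `-1` otherwise. -/
def legendreSym (a : 𝓞 K) (p : Ideal (𝓞 K)) : ℤ :=
  if ∃ x : 𝓞 K, x ^ 2 - a ∈ p then 1 else -1

open Classical in
/-- The Legendre symbol `(a/π_p^{v_p(a)} | p)` for a uniformizer `π_p`
(well defined when `v_p(a)` is even and `p ∤ 2`). -/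
def legendreUnit (a : 𝓞 K) (p : Ideal (𝓞 K)) : ℤ :=
  if ∃ π x : 𝓞 K, π ∈ p ∧ π ∉ p ^ 2 ∧
      a - x ^ 2 * π ^ vE p a ∈ p ^ (vE p a + 1) then 1 else -1

/-- The quantity `s_a(p)` (for `p ∣ 2` with `v_p(a)` even). -/
def sA (a : 𝓞 K) (p : Ideal (𝓞 K)) : ℝ :=
  (1 - 1 / (Ideal.absNorm p : ℝ)) *
      ∑ k ∈ Finset.range (vE p (4 : 𝓞 K)),
        (eta a (p ^ (vE p a + k + 1)) : ℝ) / (Ideal.absNorm p : ℝ) ^ k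
    + (eta a (p ^ (vE p (4 * a) + 1)) : ℝ) / (Ideal.absNorm p : ℝ) ^ vE p (4 : 𝓞 K)

open Classical in
/-- The quantity `r_a(p)`. -/
def rA (a : 𝓞 K) (p : Ideal (𝓞 K)) : ℝ :=
  if ¬ p ∣ Ideal.span {2 * a} then (legendreSym a p : ℝ)
  else if Odd (vE p a) then
    1 - 1 / (Ideal.absNorm p : ℝ) ^ (vE p a / 2) * (1 + 1 / (Ideal.absNorm p : ℝ))
  else if ¬ p ∣ Ideal.span {(2 : 𝓞 K)} then
    1 - 1 / (Ideal.absNorm p : ℝ) ^ (vE p a / 2) * (1 - (legendreUnit a p : ℝ))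
  else
    1 - 1 / (Ideal.absNorm p : ℝ) ^ (vE p a / 2) * (2 - sA a p)

open Classical in
/-- The character `χ` modulo `8aO_K` built from the Legendre symbol. -/
def chiA (a : 𝓞 K) (q : Ideal (𝓞 K)) : ℤ :=
  if q ⊔ Ideal.span {2 * a} = ⊤ then
    ((UniqueFactorizationMonoid.normalizedFactors q).map (legendreSym a)).prod
  else 0

/-- The residue `ρ_K` of the Dedekind zeta function of `K` at `s = 1`. -/
def rhoK (K : Type*) [Field K] [NumberField K] : ℝ :=
  (2 ^ InfinitePlace.nrRealPlaces K * (2 * Real.pi) ^ InfinitePlace.nrComplexPlaces K *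
      Units.regulator K * classNumber K) /
    (Nat.card (Units.torsion K) * Real.sqrt |(discr K : ℝ)|)

/-! ### Auxiliary lemmas -/

section DedekindAux

open UniqueFactorizationMonoid

variable {A : Type*} [CommRing A] [IsDomain A] [IsDedekindDomain A]

private lemma sSup_mem_of_sup_closed {S : Set (Ideal A)} (hne : S.Nonempty)
    (hsup : ∀ I ∈ S, ∀ J ∈ S, I ⊔ J ∈ S) : sSup S ∈ S := by
  obtain ⟨J, hJS, hmax⟩ := (IsWellFounded.wf :
    WellFounded ((· > ·) : Ideal A → Ideal A → Prop)).has_min S hne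
  have hub : ∀ I ∈ S, I ≤ J := by
    intro I hI
    have h1 : J ⊔ I ∈ S := hsup J hJS I hI
    have h3 : J ⊔ I = J := by
      by_contra hne'
      exact hmax _ h1 (lt_of_le_of_ne le_sup_left (Ne.symm hne'))
    calc I ≤ J ⊔ I := le_sup_right
    _ = J := h3
  have : sSup S = J := le_antisymm (sSup_le hub) (le_sSup hJS)
  rw [this]; exact hJS

private lemma cnt_pow_dvd [DecidableEq (Ideal A)] {I p : Ideal A} (hI : I ≠ 0) (hp : Prime p) {k : ℕ} :
    p ^ k ∣ I ↔ k ≤ (normalizedFactors I).count p := by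
  rw [dvd_iff_normalizedFactors_le_normalizedFactors (pow_ne_zero _ hp.ne_zero) hI,
    hp.irreducible.normalizedFactors_pow, Multiset.le_iff_count]
  constructor
  · intro h
    simpa [Multiset.count_replicate, normalize_eq] using h p
  · intro h b
    rw [Multiset.count_replicate]
    split_ifs with hb
    · rw [← hb, normalize_eq]; exact h
    · exact Nat.zero_le _

omit [IsDomain A] in
private lemma cnt_mul [DecidableEq (Ideal A)] {I J : Ideal A} (hI : I ≠ 0) (hJ : J ≠ 0) (p : Ideal A) :
    (normalizedFactors (I * J)).count p
      = (normalizedFactors I).count p + (normalizedFactors J).count p := by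
  rw [normalizedFactors_mul hI hJ, Multiset.count_add]

omit [IsDomain A] in
private lemma cnt_le_of_dvd [DecidableEq (Ideal A)] {I J : Ideal A} (hJ : J ≠ 0) (h : I ∣ J) (p : Ideal A) :
    (normalizedFactors I).count p ≤ (normalizedFactors J).count p := by
  have hI : I ≠ 0 := by rintro rfl; exact hJ (zero_dvd_iff.mp h)
  exact Multiset.le_iff_count.mp
    ((dvd_iff_normalizedFactors_le_normalizedFactors hI hJ).mp h) p

private lemma ne_zero_of_ge {I J : Ideal A} (hJ : J ≠ 0) (h : J ≤ I) : I ≠ 0 := by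
  intro h0
  exact hJ (le_bot_iff.mp (h.trans_eq (h0.trans Ideal.zero_eq_bot)))

private lemma cnt_sup [DecidableEq (Ideal A)] {I J p : Ideal A} (hI : I ≠ 0) (hJ : J ≠ 0) (hp : Prime p) :
    (normalizedFactors (I ⊔ J)).count p
      = min ((normalizedFactors I).count p) ((normalizedFactors J).count p) := by
  have hIJ : I ⊔ J ≠ 0 := ne_zero_of_ge hI le_sup_left
  refine le_antisymm (le_min (cnt_le_of_dvd hI (Ideal.dvd_iff_le.mpr le_sup_left) p)
    (cnt_le_of_dvd hJ (Ideal.dvd_iff_le.mpr le_sup_right) p)) ?_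
  have h1 : I ⊔ J ≤ p ^ min ((normalizedFactors I).count p) ((normalizedFactors J).count p) :=
    sup_le (Ideal.le_of_dvd ((cnt_pow_dvd hI hp).mpr (min_le_left _ _)))
      (Ideal.le_of_dvd ((cnt_pow_dvd hJ hp).mpr (min_le_right _ _)))
  exact (cnt_pow_dvd hIJ hp).mp (Ideal.dvd_iff_le.mpr h1)

end DedekindAux

/-! ### Basic facts about `sqrtCeil` and `etaMod` -/

section SqrtCeilFacts

open UniqueFactorizationMonoid

variable {K : Type*} [Field K] [NumberField K]

private lemma span_ne_zero {x : 𝓞 K} (hx : x ≠ 0) : (Ideal.span {x} : Ideal (𝓞 K)) ≠ 0 := by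
  intro h
  rw [Ideal.zero_eq_bot] at h
  exact hx (Ideal.span_singleton_eq_bot.mp h)

private lemma le_sqrtCeil (g : Ideal (𝓞 K)) : g ≤ sqrtCeil g :=
  le_sSup (show g ∣ g ^ 2 from Dvd.intro g (sq g).symm)

private lemma sqrtCeil_ne_zero {g : Ideal (𝓞 K)} (hg : g ≠ 0) : sqrtCeil g ≠ 0 :=
  ne_zero_of_ge hg (le_sqrtCeil g)

private lemma le_etaMod (a : 𝓞 K) (q : Ideal (𝓞 K)) : q ≤ etaMod a q := by
  refine le_sSup ?_
  show q * sqrtCeil (q + Ideal.span {a}) ∣ q * (q + Ideal.span {a})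
  rw [Ideal.dvd_iff_le]
  exact Ideal.mul_mono_right (le_sqrtCeil _)

private lemma etaMod_ne_zero {a : 𝓞 K} {q : Ideal (𝓞 K)} (hq : q ≠ 0) : etaMod a q ≠ 0 :=
  ne_zero_of_ge hq (le_etaMod a q)

private lemma etaMod_dvd (a : 𝓞 K) (q : Ideal (𝓞 K)) :
    q * sqrtCeil (q + Ideal.span {a}) ∣ etaMod a q * (q + Ideal.span {a}) := by
  have h : etaMod a q ∈ {J : Ideal (𝓞 K) |
      q * sqrtCeil (q + Ideal.span {a}) ∣ J * (q + Ideal.span {a})} := by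
    rw [etaMod]
    refine sSup_mem_of_sup_closed ⟨q, ?_⟩ ?_
    · show q * sqrtCeil (q + Ideal.span {a}) ∣ q * (q + Ideal.span {a})
      rw [Ideal.dvd_iff_le]
      exact Ideal.mul_mono_right (le_sqrtCeil _)
    · intro I hI J hJ
      show q * sqrtCeil (q + Ideal.span {a}) ∣ (I ⊔ J) * (q + Ideal.span {a})
      rw [Ideal.dvd_iff_le, Ideal.sup_mul]
      exact sup_le (Ideal.le_of_dvd hI) (Ideal.le_of_dvd hJ)
  exact h

/-- The fixed auxiliary ideal `(4a²)`. -/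
private def Duu (a : 𝓞 K) : Ideal (𝓞 K) := Ideal.span {4 * a ^ 2}

open Classical in
/-- The radical-like ideal: product of the distinct primes of `q`. -/
private def radI (q : Ideal (𝓞 K)) : Ideal (𝓞 K) := ((normalizedFactors q).dedup).prod

/-- The auxiliary modulus used to encode solutions. -/
private def TT (a : 𝓞 K) (q : Ideal (𝓞 K)) : Ideal (𝓞 K) := radI q * (q ⊔ Duu a)

open Classical in
private lemma radI_nf (q : Ideal (𝓞 K)) :
    normalizedFactors (radI q) = (normalizedFactors q).dedup := by
  rw [radI]
  exact normalizedFactors_prod_of_prime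
    (fun x hx => prime_of_normalized_factor x (Multiset.mem_dedup.mp hx))

open Classical in
private lemma radI_ne_zero (q : Ideal (𝓞 K)) : radI q ≠ 0 := by
  rw [radI]
  refine Multiset.prod_ne_zero ?_
  intro h0
  exact (prime_of_normalized_factor 0 (Multiset.mem_dedup.mp h0)).ne_zero rfl

open Classical in
private lemma radI_card (q : Ideal (𝓞 K)) :
    Multiset.card (normalizedFactors (radI q)) = omegaK q := by
  rw [radI_nf]
  rfl

private lemma Duu_ne_zero {a : 𝓞 K} (ha0 : a ≠ 0) : Duu a ≠ 0 :=
  span_ne_zero (mul_ne_zero (by norm_num) (pow_ne_zero 2 ha0))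

private lemma TT_ne_zero {a : 𝓞 K} {q : Ideal (𝓞 K)} (hq : q ≠ 0) : TT a q ≠ 0 :=
  mul_ne_zero (radI_ne_zero q) (ne_zero_of_ge hq le_sup_left)

end SqrtCeilFacts

/-! ### The key congruence lemma -/

section KeyLemma

open UniqueFactorizationMonoid

variable {K : Type*} [Field K] [NumberField K]

open Classical in
private lemma key_congruence (a : 𝓞 K) {q : Ideal (𝓞 K)} (hq : q ≠ 0) (ha0 : a ≠ 0)
    {r₀ r r' : 𝓞 K} (hr₀0 : r₀ ≠ 0)
    (h₀1 : Ideal.span {r₀} + etaMod a q = sqrtCeil (q + Ideal.span {a}))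
    (h1 : Ideal.span {r} + etaMod a q = sqrtCeil (q + Ideal.span {a}))
    (h2 : r ^ 2 - a ∈ q)
    (h1' : Ideal.span {r'} + etaMod a q = sqrtCeil (q + Ideal.span {a}))
    (h2' : r' ^ 2 - a ∈ q)
    (hE : (Ideal.span {r + r₀} ⊔ q) ⊔ TT a q = (Ideal.span {r' + r₀} ⊔ q) ⊔ TT a q)
    (h₀2 : r₀ ^ 2 - a ∈ q) :
    4 * a ^ 2 * (r - r') ∈ q := by
  by_cases hrr : r = r'
  · rw [hrr, sub_self, mul_zero]; exact q.zero_mem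
  have hxne : r - r' ≠ 0 := sub_ne_zero.mpr hrr
  have h2K : (2 : 𝓞 K) ≠ 0 := by norm_num
  have hDne : Duu a ≠ 0 := Duu_ne_zero ha0
  have hTne : TT a q ≠ 0 := TT_ne_zero hq
  have hrad : radI q ≠ 0 := radI_ne_zero q
  have hspanane : (Ideal.span {a} : Ideal (𝓞 K)) ≠ 0 := span_ne_zero ha0
  have hgne : q + Ideal.span {a} ≠ 0 := ne_zero_of_ge hq (by rw [Ideal.add_eq_sup]; exact le_sup_left)
  have hGne : sqrtCeil (q + Ideal.span {a}) ≠ 0 := sqrtCeil_ne_zero hgne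
  have hMne : etaMod a q ≠ 0 := etaMod_ne_zero hq
  have hspanxne : (Ideal.span {r - r'} : Ideal (𝓞 K)) ≠ 0 := span_ne_zero hxne
  have hspanr₀ne : (Ideal.span {r₀} : Ideal (𝓞 K)) ≠ 0 := span_ne_zero hr₀0
  -- reduce to ideal divisibility
  suffices hdvd : q ∣ Duu a * Ideal.span {r - r'} by
    exact Ideal.le_of_dvd hdvd
      (Ideal.mul_mem_mul (Ideal.mem_span_singleton_self _) (Ideal.mem_span_singleton_self _))
  have hprodne : Duu a * Ideal.span {r - r'} ≠ 0 := mul_ne_zero hDne hspanxne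
  rw [dvd_iff_normalizedFactors_le_normalizedFactors hq hprodne, Multiset.le_iff_count]
  intro p
  by_cases hpq : p ∈ normalizedFactors q
  swap
  · simp [Multiset.count_eq_zero.mpr hpq]
  have hp : Prime p := prime_of_normalized_factor p hpq
  rw [cnt_mul hDne hspanxne p]
  -- names for the multiplicities
  set e := (normalizedFactors q).count p with he
  set α := (normalizedFactors (Ideal.span {a} : Ideal (𝓞 K))).count p with hα
  set v2 := (normalizedFactors (Ideal.span {(2 : 𝓞 K)} : Ideal (𝓞 K))).count p with hv2
  set s := (normalizedFactors (sqrtCeil (q + Ideal.span {a}))).count p with hs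
  set m := (normalizedFactors (etaMod a q)).count p with hm
  set t := (normalizedFactors (q + Ideal.span {a})).count p with ht
  set w := (normalizedFactors (Ideal.span {r₀} : Ideal (𝓞 K))).count p with hw
  set δ := (normalizedFactors (Duu a)).count p with hδ
  set k := (normalizedFactors (Ideal.span {r - r'} : Ideal (𝓞 K))).count p with hk
  set β := (normalizedFactors (TT a q)).count p with hβ
  show e ≤ δ + k
  have he1 : 1 ≤ e := Multiset.one_le_count_iff_mem.mpr hpq
  -- δ dominates v2 + α
  have hδa : v2 + α ≤ δ := by
    have h2a : Ideal.span {2 * a} ∣ Duu a := by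
      rw [Ideal.dvd_iff_le, Duu]
      exact (Ideal.span_singleton_le_iff_mem _).mpr
        (Ideal.mem_span_singleton.mpr ⟨2 * a, by ring⟩)
    have h1 : (normalizedFactors (Ideal.span {2 * a} : Ideal (𝓞 K))).count p = v2 + α := by
      rw [← Ideal.span_singleton_mul_span_singleton, cnt_mul (span_ne_zero h2K) hspanane]
    calc v2 + α = _ := h1.symm
    _ ≤ δ := cnt_le_of_dvd hDne h2a p
  -- the multiplicity of T
  have hβval : β = 1 + min e δ := by
    rw [hβ, TT, cnt_mul hrad (ne_zero_of_ge hq le_sup_left) p, cnt_sup hq hDne hp,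
      radI_nf, Multiset.count_dedup, if_pos hpq]
  -- the four auxiliary ideals
  have hdmne : (Ideal.span {r - r₀} ⊔ q : Ideal (𝓞 K)) ≠ 0 := ne_zero_of_ge hq le_sup_right
  have hdpne : (Ideal.span {r + r₀} ⊔ q : Ideal (𝓞 K)) ≠ 0 := ne_zero_of_ge hq le_sup_right
  have hdm'ne : (Ideal.span {r' - r₀} ⊔ q : Ideal (𝓞 K)) ≠ 0 := ne_zero_of_ge hq le_sup_right
  have hdp'ne : (Ideal.span {r' + r₀} ⊔ q : Ideal (𝓞 K)) ≠ 0 := ne_zero_of_ge hq le_sup_right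
  set x := (normalizedFactors (Ideal.span {r - r₀} ⊔ q : Ideal (𝓞 K))).count p with hx
  set y := (normalizedFactors (Ideal.span {r + r₀} ⊔ q : Ideal (𝓞 K))).count p with hy
  set x' := (normalizedFactors (Ideal.span {r' - r₀} ⊔ q : Ideal (𝓞 K))).count p with hx'
  set y' := (normalizedFactors (Ideal.span {r' + r₀} ⊔ q : Ideal (𝓞 K))).count p with hy'
  -- multiplicative relation: e ≤ x + y
  have hprodle : ∀ u : 𝓞 K, u ^ 2 - a ∈ q →
      (Ideal.span {u - r₀} ⊔ q) * (Ideal.span {u + r₀} ⊔ q) ≤ q := by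
    intro u hu
    have hmemq : (u - r₀) * (u + r₀) ∈ q := by
      have hsub := q.sub_mem hu h₀2
      have heq : (u - r₀) * (u + r₀) = (u ^ 2 - a) - (r₀ ^ 2 - a) := by ring
      rw [heq]; exact hsub
    rw [Ideal.sup_mul, Ideal.mul_sup, Ideal.mul_sup]
    refine sup_le (sup_le ?_ Ideal.mul_le_right) (sup_le Ideal.mul_le_left Ideal.mul_le_right)
    rw [Ideal.span_singleton_mul_span_singleton]
    exact (Ideal.span_singleton_le_iff_mem q).mpr hmemq
  have hxy : e ≤ x + y := by
    have hd := cnt_le_of_dvd (mul_ne_zero hdmne hdpne)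
      (Ideal.dvd_iff_le.mpr (hprodle r h2)) p
    rwa [cnt_mul hdmne hdpne p] at hd
  have hxy' : e ≤ x' + y' := by
    have hd := cnt_le_of_dvd (mul_ne_zero hdm'ne hdp'ne)
      (Ideal.dvd_iff_le.mpr (hprodle r' h2')) p
    rwa [cnt_mul hdm'ne hdp'ne p] at hd
  -- gcd bound: min x y ≤ min (v2 + w) e
  have hminbound : ∀ u : 𝓞 K,
      (Ideal.span {u - r₀} ⊔ q) ⊔ (Ideal.span {u + r₀} ⊔ q) ≥ Ideal.span {2 * r₀} ⊔ q := by
    intro u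
    refine sup_le ?_ (le_sup_of_le_left le_sup_right)
    refine (Ideal.span_singleton_le_iff_mem _).mpr ?_
    have heq : 2 * r₀ = (u + r₀) - (u - r₀) := by ring
    rw [heq]
    exact sub_mem
      (Submodule.mem_sup_right (Submodule.mem_sup_left (Ideal.mem_span_singleton_self _)))
      (Submodule.mem_sup_left (Submodule.mem_sup_left (Ideal.mem_span_singleton_self _)))
  have hsp2r₀ : (Ideal.span {2 * r₀} ⊔ q : Ideal (𝓞 K)) ≠ 0 := ne_zero_of_ge hq le_sup_right
  have hcnt2r₀ : (normalizedFactors (Ideal.span {2 * r₀} ⊔ q : Ideal (𝓞 K))).count p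
      = min (v2 + w) e := by
    rw [cnt_sup (span_ne_zero (mul_ne_zero h2K hr₀0)) hq hp,
      ← Ideal.span_singleton_mul_span_singleton, cnt_mul (span_ne_zero h2K) hspanr₀ne]
  have hminle : min x y ≤ min (v2 + w) e := by
    have hd := cnt_le_of_dvd hsp2r₀ (Ideal.dvd_iff_le.mpr (hminbound r)) p
    rwa [cnt_sup hdmne hdpne hp, hcnt2r₀] at hd
  have hminle' : min x' y' ≤ min (v2 + w) e := by
    have hd := cnt_le_of_dvd hsp2r₀ (Ideal.dvd_iff_le.mpr (hminbound r')) p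
    rwa [cnt_sup hdm'ne hdp'ne hp, hcnt2r₀] at hd
  -- the relation defining w and s
  have hws : min w m = s := by
    have hsupG : Ideal.span {r₀} ⊔ etaMod a q = sqrtCeil (q + Ideal.span {a}) := by
      rw [← Ideal.add_eq_sup]; exact h₀1
    rw [← cnt_sup hspanr₀ne hMne hp, hsupG]
  -- the relation e + s ≤ m + t
  have hms : e + s ≤ m + t := by
    have hd := cnt_le_of_dvd (mul_ne_zero hMne hgne) (etaMod_dvd a q) p
    rwa [cnt_mul hq hGne p, cnt_mul hMne hgne p] at hd
  -- s ≤ t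
  have hst : s ≤ t :=
    cnt_le_of_dvd hgne (Ideal.dvd_iff_le.mpr (le_sqrtCeil _)) p
  -- t = min e α
  have htval : t = min e α := by
    rw [ht, Ideal.add_eq_sup, cnt_sup hq hspanane hp]
  -- equal fibers
  have hj : min y β = min y' β := by
    have hcE := congrArg (fun I => (normalizedFactors I).count p) hE
    rwa [cnt_sup hdpne hTne hp, cnt_sup hdp'ne hTne hp] at hcE
  -- membership extraction
  have hmem_pow : ∀ (u : 𝓞 K) (I : Ideal (𝓞 K)) (hI : I ≠ 0) (n : ℕ),
      n ≤ (normalizedFactors I).count p → u ∈ I → u ∈ p ^ n := by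
    intro u I hI n hn hu
    exact Ideal.le_of_dvd ((cnt_pow_dvd hI hp).mpr hn) hu
  have hfinish : ∀ n : ℕ, r - r' ∈ p ^ n → n ≤ k := by
    intro n hn
    exact (cnt_pow_dvd hspanxne hp).mp
      (Ideal.dvd_iff_le.mpr ((Ideal.span_singleton_le_iff_mem _).mpr hn))
  by_cases hA : min y β < β
  · -- small fiber value: the minus side is large for both solutions
    have hyj : y = min y β := by omega
    have hy'j : y' = min y' β := by omega
    have hm1 : r - r₀ ∈ p ^ (e - min y β) :=
      hmem_pow _ _ hdmne _ (by omega)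
        (Submodule.mem_sup_left (Ideal.mem_span_singleton_self _))
    have hm2 : r' - r₀ ∈ p ^ (e - min y β) :=
      hmem_pow _ _ hdm'ne _ (by omega)
        (Submodule.mem_sup_left (Ideal.mem_span_singleton_self _))
    have hm3 : r - r' ∈ p ^ (e - min y β) := by
      have heq : r - r' = (r - r₀) - (r' - r₀) := by ring
      rw [heq]; exact sub_mem hm1 hm2
    have hkge := hfinish _ hm3
    omega
  · -- large fiber value: the plus side is large for both solutions
    by_cases hB1 : e ≤ δ
    · omega
    · have hmgt : s < m := by omega
      have hweq : w = s := by omega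
      have hxδ : x ≤ δ := by omega
      have hx'δ : x' ≤ δ := by omega
      have hm1 : r + r₀ ∈ p ^ (e - δ) :=
        hmem_pow _ _ hdpne _ (by omega)
          (Submodule.mem_sup_left (Ideal.mem_span_singleton_self _))
      have hm2 : r' + r₀ ∈ p ^ (e - δ) :=
        hmem_pow _ _ hdp'ne _ (by omega)
          (Submodule.mem_sup_left (Ideal.mem_span_singleton_self _))
      have hm3 : r - r' ∈ p ^ (e - δ) := by
        have heq : r - r' = (r + r₀) - (r' + r₀) := by ring
        rw [heq]; exact sub_mem hm1 hm2
      have hkge := hfinish _ hm3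
      omega

end KeyLemma

/-! ### The counting argument -/

section MainCount

open UniqueFactorizationMonoid

variable {K : Type*} [Field K] [NumberField K]

set_option maxHeartbeats 2000000 in
set_option synthInstance.maxHeartbeats 1000000 in
open Classical in
private lemma eta_le_nat (a : 𝓞 K) (ha0 : a ≠ 0) (q : Ideal (𝓞 K)) (hq : q ≠ 0) :
    eta a q ≤ Ideal.absNorm (Duu a) *
      2 ^ Multiset.card (normalizedFactors (Duu a)) * 2 ^ omegaK q := by
  classical
  have hDne : Duu a ≠ 0 := Duu_ne_zero ha0
  have hDbot : Duu a ≠ ⊥ := by rwa [← Ideal.zero_eq_bot]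
  have hDpos : 0 < Ideal.absNorm (Duu a) :=
    Nat.pos_of_ne_zero (fun h => hDbot (Ideal.absNorm_eq_zero_iff.mp h))
  have hRHS1 : 1 ≤ Ideal.absNorm (Duu a) *
      2 ^ Multiset.card (normalizedFactors (Duu a)) * 2 ^ omegaK q := by
    have h1 : 0 < (2 : ℕ) ^ Multiset.card (normalizedFactors (Duu a)) := pow_pos (by norm_num) _
    have h2 : 0 < (2 : ℕ) ^ omegaK q := pow_pos (by norm_num) _
    exact Nat.one_le_iff_ne_zero.mpr (Nat.mul_ne_zero (Nat.mul_ne_zero hDpos.ne' h1.ne') h2.ne')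
  have hMne : etaMod a q ≠ 0 := etaMod_ne_zero hq
  have hMbot : etaMod a q ≠ ⊥ := by rwa [← Ideal.zero_eq_bot]
  letI : Fintype (𝓞 K ⧸ etaMod a q) := @Fintype.ofFinite _ (Ideal.finiteQuotientOfFreeOfNeBot _ hMbot)
  set P : (𝓞 K ⧸ etaMod a q) → Prop := fun ρ => ∃ r : 𝓞 K,
    Ideal.Quotient.mk (etaMod a q) r = ρ ∧
      Ideal.span {r} + etaMod a q = sqrtCeil (q + Ideal.span {a}) ∧
      r ^ 2 - a ∈ q with hP
  have hshow : eta a q = Nat.card {ρ : 𝓞 K ⧸ etaMod a q // P ρ} := rfl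
  rw [hshow]
  by_cases hbase : ∃ r₀ : 𝓞 K, r₀ ≠ 0 ∧
      (Ideal.span {r₀} + etaMod a q = sqrtCeil (q + Ideal.span {a})) ∧ r₀ ^ 2 - a ∈ q
  swap
  · -- every witness is `0`, so there is at most one solution class
    have hsub : ∀ x y : {ρ : 𝓞 K ⧸ etaMod a q // P ρ}, x = y := by
      intro x y
      obtain ⟨rx, hrx1, hrx2, hrx3⟩ := x.2
      obtain ⟨ry, hry1, hry2, hry3⟩ := y.2
      have hx0 : rx = 0 := by
        by_contra h0
        exact hbase ⟨rx, h0, hrx2, hrx3⟩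
      have hy0 : ry = 0 := by
        by_contra h0
        exact hbase ⟨ry, h0, hry2, hry3⟩
      apply Subtype.ext
      rw [← hrx1, ← hry1, hx0, hy0]
    have h1 : Nat.card {ρ : 𝓞 K ⧸ etaMod a q // P ρ} ≤ 1 := by
      have := Nat.card_le_card_of_injective
        (fun _ : {ρ : 𝓞 K ⧸ etaMod a q // P ρ} => (0 : Fin 1))
        (fun x y _ => hsub x y)
      simpa using this
    exact h1.trans hRHS1
  obtain ⟨r₀, hr₀0, hr₀1, hr₀2⟩ := hbase
  -- chosen lifts
  set rl : {ρ : 𝓞 K ⧸ etaMod a q // P ρ} → 𝓞 K := fun x => Classical.choose x.2 with hrldef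
  have hrl : ∀ x : {ρ : 𝓞 K ⧸ etaMod a q // P ρ},
      Ideal.Quotient.mk (etaMod a q) (rl x) = x.1 ∧
        Ideal.span {rl x} + etaMod a q = sqrtCeil (q + Ideal.span {a}) ∧
        (rl x) ^ 2 - a ∈ q := fun x => Classical.choose_spec x.2
  set F : {ρ : 𝓞 K ⧸ etaMod a q // P ρ} → Multiset (Ideal (𝓞 K)) := fun x =>
    normalizedFactors ((Ideal.span {rl x + r₀} ⊔ q) ⊔ TT a q) with hFdef
  have hTne : TT a q ≠ 0 := TT_ne_zero hq
  have hEne : ∀ x : {ρ : 𝓞 K ⧸ etaMod a q // P ρ},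
      (Ideal.span {rl x + r₀} ⊔ q) ⊔ TT a q ≠ 0 := fun x => ne_zero_of_ge hTne le_sup_right
  have hFE : ∀ x y : {ρ : 𝓞 K ⧸ etaMod a q // P ρ}, F x = F y →
      (Ideal.span {rl x + r₀} ⊔ q) ⊔ TT a q = (Ideal.span {rl y + r₀} ⊔ q) ⊔ TT a q := by
    intro x y hxy
    have h1 := prod_normalizedFactors (hEne x)
    have h2 := prod_normalizedFactors (hEne y)
    have h3 : (F x).prod = (F y).prod := by rw [hxy]
    exact associated_iff_eq.mp (h1.symm.trans (h3 ▸ h2))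
  -- the fiber bound
  have hfiber : ∀ b ∈ Finset.univ.image F,
      (Finset.univ.filter (fun x : {ρ : 𝓞 K ⧸ etaMod a q // P ρ} => F x = b)).card
        ≤ Ideal.absNorm (Duu a) := by
    intro b hb
    obtain ⟨x₀, -, hFx₀⟩ := Finset.mem_image.mp hb
    set Cu : Ideal (𝓞 K) := Submodule.comap (LinearMap.mul (𝓞 K) (𝓞 K) (4 * a ^ 2)) q with hCu
    set A : Ideal (𝓞 K) := Cu ⊔ etaMod a q with hAdef
    have hDA : Duu a * A ≤ etaMod a q := by
      rw [Ideal.mul_sup]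
      refine sup_le (le_trans ?_ (le_etaMod a q)) Ideal.mul_le_right
      rw [Duu, Ideal.span_singleton_mul_le_iff]
      intro z hz
      exact hz
    have hAbot : A ≠ ⊥ := by
      rw [← Ideal.zero_eq_bot]
      exact ne_zero_of_ge hMne le_sup_right
    have htower := Submodule.card_quotient_mul_card_quotient A (etaMod a q) le_sup_right
    have hNM : Nat.card (𝓞 K ⧸ etaMod a q) = Ideal.absNorm (etaMod a q) := by
      rw [Ideal.absNorm_apply, Submodule.cardQuot_apply]
    have hNA : Nat.card (𝓞 K ⧸ A) = Ideal.absNorm A := by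
      rw [Ideal.absNorm_apply, Submodule.cardQuot_apply]
    rw [hNM, hNA] at htower
    have hdvd : Ideal.absNorm (etaMod a q) ∣ Ideal.absNorm (Duu a) * Ideal.absNorm A := by
      rw [← map_mul]
      exact Ideal.absNorm_dvd_absNorm_of_le hDA
    have hNA0 : 0 < Ideal.absNorm A :=
      Nat.pos_of_ne_zero (fun h => hAbot (Ideal.absNorm_eq_zero_iff.mp h))
    have hmapcard : Nat.card ↥(Submodule.map (etaMod a q).mkQ A) ≤ Ideal.absNorm (Duu a) := by
      rw [← htower] at hdvd
      exact Nat.le_of_dvd hDpos ((Nat.mul_dvd_mul_iff_right hNA0).mp hdvd)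
    -- injection of the fiber into `A.map mkQ`
    have hmem : ∀ x : {x : {ρ : 𝓞 K ⧸ etaMod a q // P ρ} // F x = b},
        x.1.1 - x₀.1 ∈ Submodule.map (etaMod a q).mkQ A := by
      intro x
      have hEeq := hFE x.1 x₀ (x.2.trans hFx₀.symm)
      have hcore := key_congruence a hq ha0 hr₀0 hr₀1 (hrl x.1).2.1 (hrl x.1).2.2
        (hrl x₀).2.1 (hrl x₀).2.2 hEeq hr₀2
      refine Submodule.mem_map.mpr ⟨rl x.1 - rl x₀, Submodule.mem_sup_left ?_, ?_⟩
      · show 4 * a ^ 2 * (rl x.1 - rl x₀) ∈ q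
        exact hcore
      · rw [Submodule.mkQ_apply, Ideal.Quotient.mk_eq_mk, map_sub, (hrl x.1).1, (hrl x₀).1]
    have hinj : Function.Injective
        (fun x : {x : {ρ : 𝓞 K ⧸ etaMod a q // P ρ} // F x = b} =>
          (⟨x.1.1 - x₀.1, hmem x⟩ : ↥(Submodule.map (etaMod a q).mkQ A))) := by
      intro x y hxy
      have h1 : x.1.1 - x₀.1 = y.1.1 - x₀.1 := congrArg Subtype.val hxy
      have h2 : x.1.1 = y.1.1 := sub_left_inj.mp h1
      exact Subtype.ext (Subtype.ext h2)
    have hcard1 : (Finset.univ.filter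
        (fun x : {ρ : 𝓞 K ⧸ etaMod a q // P ρ} => F x = b)).card
          = Nat.card {x : {ρ : 𝓞 K ⧸ etaMod a q // P ρ} // F x = b} := by
      rw [Nat.card_eq_fintype_card, Fintype.card_subtype]
    rw [hcard1]
    exact (Nat.card_le_card_of_injective _ hinj).trans hmapcard
  -- assemble
  have hqD : q ⊔ Duu a ≠ 0 := ne_zero_of_ge hq le_sup_left
  have hcardnfT : Multiset.card (normalizedFactors (TT a q))
      ≤ omegaK q + Multiset.card (normalizedFactors (Duu a)) := by
    rw [TT, normalizedFactors_mul (radI_ne_zero q) hqD, Multiset.card_add, radI_card]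
    refine Nat.add_le_add le_rfl ?_
    exact Multiset.card_le_card
      ((dvd_iff_normalizedFactors_le_normalizedFactors hqD hDne).mp
        (Ideal.dvd_iff_le.mpr le_sup_right))
  have himg : (Finset.univ.image F).card
      ≤ 2 ^ (omegaK q + Multiset.card (normalizedFactors (Duu a))) := by
    have himgsub : Finset.univ.image F
        ⊆ ((normalizedFactors (TT a q)).powerset).toFinset := by
      intro b hb
      obtain ⟨x, -, rfl⟩ := Finset.mem_image.mp hb
      rw [Multiset.mem_toFinset, Multiset.mem_powerset]
      exact (dvd_iff_normalizedFactors_le_normalizedFactors (hEne x) hTne).mp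
        (Ideal.dvd_iff_le.mpr le_sup_right)
    have h1 := Finset.card_le_card himgsub
    have h2 := Multiset.toFinset_card_le ((normalizedFactors (TT a q)).powerset)
    rw [Multiset.card_powerset] at h2
    exact (h1.trans h2).trans (Nat.pow_le_pow_right (by norm_num) hcardnfT)
  calc Nat.card {ρ : 𝓞 K ⧸ etaMod a q // P ρ}
      = (Finset.univ : Finset {ρ : 𝓞 K ⧸ etaMod a q // P ρ}).card := by
        rw [Nat.card_eq_fintype_card]; rfl
    _ ≤ Ideal.absNorm (Duu a) * (Finset.univ.image F).card :=
        Finset.card_le_mul_card_image _ _ hfiber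
    _ ≤ Ideal.absNorm (Duu a)
          * 2 ^ (omegaK q + Multiset.card (normalizedFactors (Duu a))) :=
        Nat.mul_le_mul_left _ himg
    _ = Ideal.absNorm (Duu a) * 2 ^ Multiset.card (normalizedFactors (Duu a))
          * 2 ^ omegaK q := by
        rw [pow_add]; ring

end MainCount


/-- `η(𝔮;a) ≤ C · 2^{ω_K(𝔮)}` for a constant `C` depending only on `K` and `a`. -/
theorem eta_le_const_mul_two_pow_omega (a : 𝓞 K)
    (ha : ¬ IsSquare (algebraMap (𝓞 K) K a)) :
    ∃ C : ℝ, ∀ q : Ideal (𝓞 K), q ≠ 0 →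
      (eta a q : ℝ) ≤ C * 2 ^ omegaK q := by
  classical
  have ha0 : a ≠ 0 := by
    rintro rfl
    exact ha ⟨0, by simp⟩
  refine ⟨((Ideal.absNorm (Duu a) *
    2 ^ Multiset.card (UniqueFactorizationMonoid.normalizedFactors (Duu a)) : ℕ) : ℝ), ?_⟩
  intro q hq
  have hkey := eta_le_nat a ha0 q hq
  calc (eta a q : ℝ)
      ≤ ((Ideal.absNorm (Duu a) *
          2 ^ Multiset.card (UniqueFactorizationMonoid.normalizedFactors (Duu a))
          * 2 ^ omegaK q : ℕ) : ℝ) := Nat.cast_le.mpr hkey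
    _ = _ := by push_cast; ring


end ManinSplitTorsor
end
end

section
/- There is a constant C depending only on K such that the following holds. Let 𝔞 be a nonzero fractional ideal of K, b ∈ K, and for each archimedean place v of K let y_v ∈ K_v and c_v > 0. Let 𝔅 := {a′ ∈ K : |σ_v(a′)² − y_v|_v ≤ c_v for all v | ∞}. Then #((b + 𝔞) ∩ 𝔅) ≤ C · ((∏_{v|∞} c_v)^{1/2} / N𝔞 + 1). -/
open NumberField

noncomputable section

namespace ManinSplitTorsor

variable {K : Type*} [Field K] [NumberField K]

private lemma im_eq_zero_of_isReal {w : InfinitePlace K} (hw : w.IsReal) (a : K) :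
    (w.embedding a).im = 0 := by
  have h := NumberField.InfinitePlace.isReal_iff.mp hw
  rw [NumberField.ComplexEmbedding.isReal_iff] at h
  have h2 : (NumberField.ComplexEmbedding.conjugate (w.embedding)) a = w.embedding a := by
    rw [h]
  rw [NumberField.ComplexEmbedding.conjugate_coe_eq] at h2
  have := congrArg Complex.im h2
  simp only [Complex.conj_im] at this
  linarith

private lemma norm_lb (𝔞 : FractionalIdeal (nonZeroDivisors (𝓞 K)) K) (h𝔞 : 𝔞 ≠ 0)
    {x : K} (hx : x ∈ 𝔞) (hx0 : x ≠ 0) :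
    (FractionalIdeal.absNorm 𝔞 : ℚ) ≤ |Algebra.norm ℚ x| := by
  have hsp : FractionalIdeal.spanSingleton (nonZeroDivisors (𝓞 K)) x ≤ 𝔞 :=
    FractionalIdeal.spanSingleton_le_iff_mem.mpr hx
  have hinv : 𝔞 * 𝔞⁻¹ = 1 := mul_inv_cancel₀ h𝔞
  have hJle : 𝔞⁻¹ * FractionalIdeal.spanSingleton (nonZeroDivisors (𝓞 K)) x ≤ 1 := by
    calc 𝔞⁻¹ * FractionalIdeal.spanSingleton (nonZeroDivisors (𝓞 K)) x
        ≤ 𝔞⁻¹ * 𝔞 := mul_right_mono hsp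
      _ = 1 := by rw [mul_comm]; exact hinv
  obtain ⟨J₀, hJ₀⟩ := FractionalIdeal.le_one_iff_exists_coeIdeal.mp hJle
  have hfac : FractionalIdeal.spanSingleton (nonZeroDivisors (𝓞 K)) x
      = 𝔞 * (J₀ : FractionalIdeal (nonZeroDivisors (𝓞 K)) K) := by
    rw [hJ₀, ← mul_assoc, hinv, one_mul]
  have hnorm : |Algebra.norm ℚ x| = FractionalIdeal.absNorm 𝔞 * (Ideal.absNorm J₀ : ℚ) := by
    rw [← FractionalIdeal.absNorm_span_singleton (R := 𝓞 K), hfac, map_mul,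
      FractionalIdeal.coeIdeal_absNorm]
  have hJ0 : J₀ ≠ 0 := by
    rintro rfl
    rw [show ((0 : Ideal (𝓞 K)) : FractionalIdeal (nonZeroDivisors (𝓞 K)) K) = 0 from FractionalIdeal.coeIdeal_bot, mul_zero] at hfac
    exact hx0 (by simpa [FractionalIdeal.spanSingleton_eq_zero_iff] using hfac)
  have h1 : (1 : ℚ) ≤ (Ideal.absNorm J₀ : ℚ) := by
    exact_mod_cast Nat.one_le_iff_ne_zero.mpr (by simpa [Ideal.absNorm_eq_zero_iff] using hJ0)
  have h0 : (0:ℚ) ≤ FractionalIdeal.absNorm 𝔞 := FractionalIdeal.absNorm_nonneg 𝔞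
  nlinarith [hnorm]

set_option maxHeartbeats 1600000 in
/-- Counting points of a shifted fractional ideal in a region defined by
quadratic archimedean conditions. -/
theorem quadratic_condition_count :
    ∃ C : ℝ, 0 < C ∧
      ∀ (𝔞 : FractionalIdeal (nonZeroDivisors (𝓞 K)) K), 𝔞 ≠ 0 →
      ∀ (b : K) (y : InfinitePlace K → ℂ) (c : InfinitePlace K → ℝ),
      (∀ w : InfinitePlace K, w.IsReal → (y w).im = 0) →
      (∀ w : InfinitePlace K, 0 < c w) →
      {a' : K | a' - b ∈ 𝔞 ∧
          ∀ w : InfinitePlace K,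
            ‖(w.embedding a') ^ 2 - y w‖ ^ w.mult ≤ c w}.Finite ∧
      (Nat.card {a' : K | a' - b ∈ 𝔞 ∧
          ∀ w : InfinitePlace K,
            ‖(w.embedding a') ^ 2 - y w‖ ^ w.mult ≤ c w} : ℝ) ≤
        C * ((∏ w : InfinitePlace K, c w) ^ ((1 : ℝ) / 2) /
          (FractionalIdeal.absNorm 𝔞 : ℝ) + 1) := by
  classical
  have hn0 : 0 < Module.finrank ℚ K := Module.finrank_pos
  set n := Module.finrank ℚ K with hn
  set p := Fintype.card (InfinitePlace K) with hp
  refine ⟨(4 ^ p * 3 ^ n * 2 ^ n) * ((2 * 4 ^ n * Real.sqrt 2 ^ n) + 1), by positivity, ?_⟩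
  intro 𝔞 h𝔞 b y c hy hc
  set S : Set K := {a' : K | a' - b ∈ 𝔞 ∧
      ∀ w : InfinitePlace K,
        ‖(w.embedding a') ^ 2 - y w‖ ^ w.mult ≤ c w} with hSdef
  set N : ℝ := ((FractionalIdeal.absNorm 𝔞 : ℚ) : ℝ) with hNdef
  have hN : 0 < N := by
    rw [hNdef]
    have h1 : (0:ℚ) ≤ FractionalIdeal.absNorm 𝔞 := FractionalIdeal.absNorm_nonneg 𝔞
    have h2 : FractionalIdeal.absNorm 𝔞 ≠ 0 := fun h => h𝔞 (FractionalIdeal.absNorm_eq_zero_iff.mp h)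
    exact_mod_cast lt_of_le_of_ne h1 (Ne.symm h2)
  set D : InfinitePlace K → ℝ := fun w => Real.sqrt 2 * (c w) ^ ((1:ℝ)/(2 * (w.mult : ℝ))) with hDdef
  have hD : ∀ w, 0 < D w := by
    intro w
    have h1 := hc w
    have h2 : (0:ℝ) < Real.sqrt 2 := by positivity
    have h3 : (0:ℝ) < (c w) ^ ((1:ℝ)/(2 * (w.mult : ℝ))) := Real.rpow_pos_of_pos h1 _
    rw [hDdef]
    positivity
  set R : ℝ := ∏ w : InfinitePlace K, D w ^ w.mult with hRdef
  have hR : 0 < R := Finset.prod_pos fun w _ => pow_pos (hD w) _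
  set x : ℝ := (2 * 4 ^ n * R / N) ^ ((1:ℝ)/(n:ℝ)) with hxdef
  have hxbase : 0 < 2 * 4 ^ n * R / N := by positivity
  have hx : 0 < x := Real.rpow_pos_of_pos hxbase _
  set M : ℕ := ⌈x⌉₊ with hMdef
  have hM0 : 0 < M := Nat.ceil_pos.mpr hx
  have hM0' : (0:ℝ) < M := by exact_mod_cast hM0
  have hMx : x ≤ M := Nat.le_ceil x
  have hnne : ((n:ℝ)) ≠ 0 := by exact_mod_cast hn0.ne'
  have hxn : x ^ n = 2 * 4 ^ n * R / N := by
    rw [hxdef, ← Real.rpow_natCast ((2 * 4 ^ n * R / N) ^ ((1:ℝ)/(n:ℝ))) n,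
      ← Real.rpow_mul hxbase.le, one_div, inv_mul_cancel₀ hnne, Real.rpow_one]
  have hMn : (4 / (M:ℝ)) ^ n * R ≤ N / 2 := by
    have h1 : x ^ n ≤ (M:ℝ) ^ n := pow_le_pow_left₀ hx.le hMx n
    rw [hxn] at h1
    have h2 : 2 * 4 ^ n * R ≤ (M:ℝ) ^ n * N := by
      rw [div_le_iff₀ hN] at h1; linarith
    have hMpow : (0:ℝ) < (M:ℝ) ^ n := pow_pos hM0' n
    rw [div_pow, div_mul_eq_mul_div, div_le_div_iff₀ hMpow (by norm_num : (0:ℝ) < 2)]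
    nlinarith
  have hMle : (M:ℝ) ≤ x + 1 := by
    rw [hMdef]
    exact le_of_lt (Nat.ceil_lt_add_one hx.le)
  clear_value N D R x M
  -- norm lower bound
  have hprod : ∀ δ : K, δ ∈ 𝔞 → δ ≠ 0 →
      N ≤ ∏ w : InfinitePlace K, ‖w.embedding δ‖ ^ w.mult := by
    intro δ hδ hδ0
    have h1 : (FractionalIdeal.absNorm 𝔞 : ℚ) ≤ |Algebra.norm ℚ δ| := norm_lb 𝔞 h𝔞 hδ hδ0
    have h2 := NumberField.InfinitePlace.prod_eq_abs_norm δ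
    have h3 : ∏ w : InfinitePlace K, w δ ^ w.mult
        = ∏ w : InfinitePlace K, ‖w.embedding δ‖ ^ w.mult := by
      refine Finset.prod_congr rfl fun w _ => ?_
      rw [← NumberField.InfinitePlace.norm_embedding_eq]
    rw [h3] at h2
    rw [hNdef, h2]
    exact_mod_cast h1
  -- archimedean conditions
  have hC1 : ∀ a ∈ S, ∀ w : InfinitePlace K,
      ‖(w.embedding a) ^ 2 - y w‖ ≤ (c w) ^ ((1:ℝ)/(w.mult : ℝ)) := by
    intro a ha w
    have h := ha.2 w
    have hm : ((w.mult : ℝ)) ≠ 0 := by exact_mod_cast NumberField.InfinitePlace.mult_ne_zero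
    have hcpow : ((c w) ^ ((1:ℝ)/(w.mult:ℝ))) ^ (w.mult) = c w := by
      rw [← Real.rpow_natCast ((c w) ^ ((1:ℝ)/(w.mult:ℝ))) w.mult, ← Real.rpow_mul (hc w).le,
        one_div, inv_mul_cancel₀ hm, Real.rpow_one]
    refine le_of_pow_le_pow_left₀ (NumberField.InfinitePlace.mult_ne_zero (w := w))
      (Real.rpow_nonneg (hc w).le _) ?_
    rw [hcpow]; exact h
  set g : K → InfinitePlace K → Bool × Bool := fun a w =>
    (decide (0 ≤ (w.embedding a).re), decide (0 ≤ (w.embedding a).im)) with hgdef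
  have hpair : ∀ a ∈ S, ∀ a' ∈ S, ∀ w : InfinitePlace K, g a w = g a' w →
      ‖w.embedding a - w.embedding a'‖ ≤ D w := by
    intro a ha a' ha' w hgw
    have h1 := hC1 a ha w
    have h2 := hC1 a' ha' w
    have hzz : ‖(w.embedding a) ^ 2 - (w.embedding a') ^ 2‖
        ≤ 2 * (c w) ^ ((1:ℝ)/(w.mult:ℝ)) := by
      have he : (w.embedding a) ^ 2 - (w.embedding a') ^ 2
          = ((w.embedding a) ^ 2 - y w) - ((w.embedding a') ^ 2 - y w) := by ring
      rw [he]
      calc ‖((w.embedding a) ^ 2 - y w) - ((w.embedding a') ^ 2 - y w)‖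
          ≤ ‖(w.embedding a) ^ 2 - y w‖ + ‖(w.embedding a') ^ 2 - y w‖ :=
            by
              exact norm_sub_le _ _
        _ ≤ _ := by linarith
    have hre : (0 ≤ (w.embedding a).re ↔ 0 ≤ (w.embedding a').re) := by
      have h := congrArg Prod.fst hgw
      simp only [hgdef] at h
      exact decide_eq_decide.mp h
    have him : (0 ≤ (w.embedding a).im ↔ 0 ≤ (w.embedding a').im) := by
      have h := congrArg Prod.snd hgw
      simp only [hgdef] at h
      exact decide_eq_decide.mp h
    have hsign : 0 ≤ (w.embedding a).re * (w.embedding a').re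
        + (w.embedding a).im * (w.embedding a').im := by
      have k1 : 0 ≤ (w.embedding a).re * (w.embedding a').re := by
        rcases le_or_gt 0 (w.embedding a).re with h | h
        · exact mul_nonneg h (hre.mp h)
        · have h2' : (w.embedding a').re < 0 := by
            by_contra hh
            exact absurd (hre.mpr (not_lt.mp hh)) (not_le.mpr h)
          exact le_of_lt (mul_pos_of_neg_of_neg h h2')
      have k2 : 0 ≤ (w.embedding a).im * (w.embedding a').im := by
        rcases le_or_gt 0 (w.embedding a).im with h | h
        · exact mul_nonneg h (him.mp h)
        · have h2' : (w.embedding a').im < 0 := by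
            by_contra hh
            exact absurd (him.mpr (not_lt.mp hh)) (not_le.mpr h)
          exact le_of_lt (mul_pos_of_neg_of_neg h h2')
      linarith
    have hkey : ‖w.embedding a - w.embedding a'‖
        ≤ ‖w.embedding a + w.embedding a'‖ := by
      have hs1 : ‖w.embedding a - w.embedding a'‖ ^ 2
          ≤ ‖w.embedding a + w.embedding a'‖ ^ 2 := by
        rw [Complex.sq_norm, Complex.sq_norm, Complex.normSq_apply, Complex.normSq_apply,
          Complex.sub_re, Complex.sub_im, Complex.add_re, Complex.add_im]
        nlinarith [hsign]
      exact le_of_pow_le_pow_left₀ two_ne_zero (norm_nonneg _) hs1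
    have hsq : ‖w.embedding a - w.embedding a'‖ ^ 2
        ≤ 2 * (c w) ^ ((1:ℝ)/(w.mult:ℝ)) := by
      calc ‖w.embedding a - w.embedding a'‖ ^ 2
          = ‖w.embedding a - w.embedding a'‖
            * ‖w.embedding a - w.embedding a'‖ := sq _
        _ ≤ ‖w.embedding a + w.embedding a'‖
            * ‖w.embedding a - w.embedding a'‖ :=
            mul_le_mul_of_nonneg_right hkey (norm_nonneg _)
        _ = ‖(w.embedding a + w.embedding a') * (w.embedding a - w.embedding a')‖ :=
            (norm_mul _ _).symm
        _ = ‖(w.embedding a) ^ 2 - (w.embedding a') ^ 2‖ := by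
            rw [show (w.embedding a + w.embedding a') * (w.embedding a - w.embedding a')
              = (w.embedding a) ^ 2 - (w.embedding a') ^ 2 from by ring]
        _ ≤ _ := hzz
    have hm : ((w.mult : ℝ)) ≠ 0 := by exact_mod_cast NumberField.InfinitePlace.mult_ne_zero
    have hD2 : D w ^ 2 = 2 * (c w) ^ ((1:ℝ)/(w.mult:ℝ)) := by
      simp only [hDdef]
      rw [mul_pow, Real.sq_sqrt (by norm_num : (0:ℝ) ≤ 2)]
      congr 1
      rw [← Real.rpow_natCast ((c w) ^ ((1:ℝ)/(2 * (w.mult:ℝ)))) 2, ← Real.rpow_mul (hc w).le]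
      congr 1
      push_cast
      field_simp
    refine le_of_pow_le_pow_left₀ two_ne_zero (hD w).le ?_
    rw [hD2]; exact hsq
  have hsub : ∀ a ∈ S, ∀ a' ∈ S, a - a' ∈ 𝔞 := by
    intro a ha a' ha'
    have h1 := ha.1
    have h2 := ha'.1
    have he : a - a' = (a - b) - (a' - b) := by ring
    rw [he, ← FractionalIdeal.mem_coe]
    rw [← FractionalIdeal.mem_coe] at h1 h2
    exact sub_mem h1 h2
  have hsmall : ∀ a ∈ S, ∀ a' ∈ S,
      (∀ w : InfinitePlace K, ‖w.embedding a - w.embedding a'‖ ≤ 4 * D w / M) →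
      a = a' := by
    intro a ha a' ha' hbound
    by_contra hne
    have hδ : a - a' ∈ 𝔞 := hsub a ha a' ha'
    have hδ0 : a - a' ≠ 0 := sub_ne_zero_of_ne hne
    have h1 := hprod (a - a') hδ hδ0
    have h2 : ∏ w : InfinitePlace K, ‖w.embedding (a - a')‖ ^ w.mult
        ≤ ∏ w : InfinitePlace K, (4 * D w / M) ^ w.mult := by
      refine Finset.prod_le_prod (fun w _ => by positivity) (fun w _ => ?_)
      refine pow_le_pow_left₀ (norm_nonneg _) ?_ _
      rw [map_sub]
      exact hbound w
    have h3 : ∏ w : InfinitePlace K, (4 * D w / M) ^ w.mult = (4 / (M:ℝ)) ^ n * R := by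
      have hterm : ∀ w : InfinitePlace K,
          (4 * D w / M) ^ w.mult = (4/(M:ℝ)) ^ w.mult * D w ^ w.mult := by
        intro w; rw [← mul_pow]; congr 1; ring
      rw [Finset.prod_congr rfl (fun w _ => hterm w), Finset.prod_mul_distrib,
        Finset.prod_pow_eq_pow_sum, NumberField.InfinitePlace.sum_mult_eq, ← hn, hRdef]
    rw [h3] at h2
    linarith
  have hTex : ∀ a ∈ S, ∃ a', a' ∈ S ∧ g a' = g a := fun a ha => ⟨a, ha, rfl⟩
  set T : (InfinitePlace K → Bool × Bool) → K := fun g0 =>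
    if h : ∃ a', a' ∈ S ∧ g a' = g0 then h.choose else 0 with hTdef
  have hT : ∀ a ∈ S, T (g a) ∈ S ∧ g (T (g a)) = g a := by
    intro a ha
    have h : ∃ a', a' ∈ S ∧ g a' = g a := hTex a ha
    simp only [hTdef, dif_pos h]
    exact h.choose_spec
  set idx : ℝ → ℝ → ℕ := fun d o => min (⌊(o + d) * M / (2 * d)⌋.toNat) (M + 1) with hidxdef
  have hidx_le : ∀ d o, idx d o ≤ M + 1 := fun d o => min_le_right _ _
  have hidx_eq : ∀ d : ℝ, 0 < d → ∀ o o' : ℝ, |o| ≤ d → |o'| ≤ d →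
      idx d o = idx d o' → |o - o'| ≤ 2 * d / M := by
    intro d hd o o' ho ho' heq
    have floor_facts : ∀ u : ℝ, |u| ≤ d →
        0 ≤ ⌊(u + d) * M / (2 * d)⌋ ∧ ⌊(u + d) * M / (2 * d)⌋ ≤ (M:ℤ) := by
      intro u hu
      obtain ⟨hu1, hu2⟩ := abs_le.mp hu
      have hge : (0:ℝ) ≤ (u + d) * M / (2 * d) := by
        apply div_nonneg _ (by linarith)
        have : (0:ℝ) ≤ u + d := by linarith
        positivity
      have hle : (u + d) * M / (2 * d) ≤ M := by
        rw [div_le_iff₀ (by linarith : (0:ℝ) < 2 * d)]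
        nlinarith
      refine ⟨Int.floor_nonneg.mpr hge, ?_⟩
      calc ⌊(u + d) * M / (2 * d)⌋ ≤ ⌊(M:ℝ)⌋ := Int.floor_le_floor hle
        _ = (M:ℤ) := Int.floor_natCast M
    obtain ⟨hf1, hf2⟩ := floor_facts o ho
    obtain ⟨hg1, hg2⟩ := floor_facts o' ho'
    have heq' : ⌊(o + d) * M / (2 * d)⌋ = ⌊(o' + d) * M / (2 * d)⌋ := by
      simp only [hidxdef] at heq
      omega
    have hu1 := Int.lt_floor_add_one ((o + d) * M / (2 * d))
    have hu2 := Int.floor_le ((o + d) * M / (2 * d))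
    have hv1 := Int.lt_floor_add_one ((o' + d) * M / (2 * d))
    have hv2 := Int.floor_le ((o' + d) * M / (2 * d))
    have ecast : ((⌊(o + d) * M / (2 * d)⌋ : ℤ) : ℝ) = ((⌊(o' + d) * M / (2 * d)⌋ : ℤ) : ℝ) := by
      exact_mod_cast congrArg (fun z : ℤ => (z : ℝ)) heq'
    have hlt : |(o + d) * M / (2 * d) - ((o' + d) * M / (2 * d))| < 1 := by
      rw [abs_sub_lt_iff]
      constructor <;> linarith
    have hdiff : (o + d) * M / (2 * d) - (o' + d) * M / (2 * d) = (o - o') * M / (2 * d) := by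
      ring
    rw [hdiff] at hlt
    rw [abs_div, abs_mul, abs_of_pos (by linarith : (0:ℝ) < 2 * d),
      abs_of_nonneg (le_of_lt hM0')] at hlt
    rw [div_lt_one (by linarith : (0:ℝ) < 2 * d)] at hlt
    rw [le_div_iff₀ hM0']
    linarith
  set bnd : InfinitePlace K → ℕ := fun w => if w.IsComplex then M + 2 else 1 with hbnddef
  set F : S → (InfinitePlace K → Bool × Bool) × (∀ w : InfinitePlace K, Fin (M + 2) × Fin (bnd w)) :=
    fun a => ⟨g (a:K), fun w =>
      (⟨idx (D w) ((w.embedding (a:K)).re - (w.embedding (T (g (a:K)))).re),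
         Nat.lt_succ_of_le (hidx_le _ _)⟩,
       ⟨if w.IsComplex then idx (D w) ((w.embedding (a:K)).im - (w.embedding (T (g (a:K)))).im)
          else 0, by
          simp only [hbnddef]
          split_ifs with h
          · exact Nat.lt_succ_of_le (hidx_le _ _)
          · norm_num⟩)⟩ with hFdef
  have hFinj : Function.Injective F := by
    rintro ⟨a, ha⟩ ⟨a', ha'⟩ hFeq
    simp only [hFdef] at hFeq
    have hg1 : g a = g a' := congrArg Prod.fst hFeq
    have hcells := congrArg Prod.snd hFeq
    apply Subtype.ext
    refine hsmall a ha a' ha' ?_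
    intro w
    have hTS := hT a ha
    have hw := congrFun hcells w
    simp only at hw
    have hre_idx : idx (D w) ((w.embedding a).re - (w.embedding (T (g a))).re)
        = idx (D w) ((w.embedding a').re - (w.embedding (T (g a'))).re) := by
      have := congrArg Prod.fst hw
      exact congrArg Fin.val this
    have him_idx : (if w.IsComplex then
          idx (D w) ((w.embedding a).im - (w.embedding (T (g a))).im) else 0)
        = (if w.IsComplex then
          idx (D w) ((w.embedding a').im - (w.embedding (T (g a'))).im) else 0) := by
      have := congrArg Prod.snd hw
      exact congrArg Fin.val this
    rw [← hg1] at hre_idx him_idx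
    have hclass : g a w = g (T (g a)) w := (congrFun hTS.2 w).symm
    have hclass' : g a' w = g (T (g a)) w := by
      rw [← hg1] at *
      rw [hTS.2, ← hg1]

    have hb1 : |(w.embedding a).re - (w.embedding (T (g a))).re| ≤ D w := by
      have hp := hpair a ha (T (g a)) hTS.1 w hclass
      calc |(w.embedding a).re - (w.embedding (T (g a))).re|
          = |(w.embedding a - w.embedding (T (g a))).re| := by rw [Complex.sub_re]
        _ ≤ ‖w.embedding a - w.embedding (T (g a))‖ := Complex.abs_re_le_norm _
        _ ≤ D w := hp
    have hb1' : |(w.embedding a').re - (w.embedding (T (g a))).re| ≤ D w := by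
      have hp := hpair a' ha' (T (g a)) hTS.1 w hclass'
      calc |(w.embedding a').re - (w.embedding (T (g a))).re|
          = |(w.embedding a' - w.embedding (T (g a))).re| := by rw [Complex.sub_re]
        _ ≤ ‖w.embedding a' - w.embedding (T (g a))‖ := Complex.abs_re_le_norm _
        _ ≤ D w := hp
    have hb2 : |(w.embedding a).im - (w.embedding (T (g a))).im| ≤ D w := by
      have hp := hpair a ha (T (g a)) hTS.1 w hclass
      calc |(w.embedding a).im - (w.embedding (T (g a))).im|
          = |(w.embedding a - w.embedding (T (g a))).im| := by rw [Complex.sub_im]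
        _ ≤ ‖w.embedding a - w.embedding (T (g a))‖ := Complex.abs_im_le_norm _
        _ ≤ D w := hp
    have hb2' : |(w.embedding a').im - (w.embedding (T (g a))).im| ≤ D w := by
      have hp := hpair a' ha' (T (g a)) hTS.1 w hclass'
      calc |(w.embedding a').im - (w.embedding (T (g a))).im|
          = |(w.embedding a' - w.embedding (T (g a))).im| := by rw [Complex.sub_im]
        _ ≤ ‖w.embedding a' - w.embedding (T (g a))‖ := Complex.abs_im_le_norm _
        _ ≤ D w := hp
    have hre_small : |(w.embedding a).re - (w.embedding a').re| ≤ 2 * D w / M := by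
      have h := hidx_eq (D w) (hD w) _ _ hb1 hb1' hre_idx
      have e : ((w.embedding a).re - (w.embedding (T (g a))).re)
          - ((w.embedding a').re - (w.embedding (T (g a))).re)
          = (w.embedding a).re - (w.embedding a').re := by ring
      rwa [e] at h
    have him_small : |(w.embedding a).im - (w.embedding a').im| ≤ 2 * D w / M := by
      rcases NumberField.InfinitePlace.isReal_or_isComplex w with hwr | hwc
      · rw [im_eq_zero_of_isReal hwr a, im_eq_zero_of_isReal hwr a', sub_zero, abs_zero]
        exact div_nonneg (mul_nonneg (by norm_num) (hD w).le) hM0'.le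
      · rw [if_pos hwc, if_pos hwc] at him_idx
        have h := hidx_eq (D w) (hD w) _ _ hb2 hb2' him_idx
        have e : ((w.embedding a).im - (w.embedding (T (g a))).im)
            - ((w.embedding a').im - (w.embedding (T (g a))).im)
            = (w.embedding a).im - (w.embedding a').im := by ring
        rwa [e] at h
    calc ‖w.embedding a - w.embedding a'‖
        ≤ |(w.embedding a - w.embedding a').re| + |(w.embedding a - w.embedding a').im| :=
          Complex.norm_le_abs_re_add_abs_im _
      _ ≤ 2 * D w / M + 2 * D w / M := by
          rw [Complex.sub_re, Complex.sub_im]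
          exact add_le_add hre_small him_small
      _ = 4 * D w / M := by ring
  have hfinite : Finite S := Finite.of_injective F hFinj
  have hSfin : S.Finite := Set.finite_coe_iff.mp hfinite
  refine ⟨hSfin, ?_⟩
  have hcard1 : Nat.card S ≤ 4 ^ p * (M + 2) ^ n := by
    have h1 := Nat.card_le_card_of_injective F hFinj
    have h2 : Nat.card ((InfinitePlace K → Bool × Bool)
        × (∀ w : InfinitePlace K, Fin (M + 2) × Fin (bnd w)))
        = 4 ^ p * ∏ w : InfinitePlace K, ((M + 2) * bnd w) := by
      rw [Nat.card_eq_fintype_card, Fintype.card_prod, Fintype.card_fun, Fintype.card_prod,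
        Fintype.card_bool, Fintype.card_pi]
      simp only [Fintype.card_prod, Fintype.card_fin]
      norm_num [hp]
    have h3 : ∏ w : InfinitePlace K, ((M + 2) * bnd w) = (M + 2) ^ n := by
      have hterm : ∀ w : InfinitePlace K, (M + 2) * bnd w = (M + 2) ^ w.mult := by
        intro w
        simp only [hbnddef, NumberField.InfinitePlace.mult]
        rcases NumberField.InfinitePlace.isReal_or_isComplex w with hwr | hwc
        · rw [if_neg (NumberField.InfinitePlace.not_isComplex_iff_isReal.mpr hwr), if_pos hwr]
          ring
        · rw [if_pos hwc, if_neg (NumberField.InfinitePlace.not_isReal_iff_isComplex.mpr hwc)]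
          ring
      rw [Finset.prod_congr rfl (fun w _ => hterm w), Finset.prod_pow_eq_pow_sum,
        NumberField.InfinitePlace.sum_mult_eq, ← hn]
    calc Nat.card S ≤ Nat.card ((InfinitePlace K → Bool × Bool)
          × (∀ w : InfinitePlace K, Fin (M + 2) × Fin (bnd w))) := h1
      _ = 4 ^ p * ∏ w : InfinitePlace K, ((M + 2) * bnd w) := h2
      _ = 4 ^ p * (M + 2) ^ n := by rw [h3]
  -- final arithmetic
  have hcardR : (Nat.card S : ℝ) ≤ 4 ^ p * ((M:ℝ) + 2) ^ n := by
    have := hcard1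
    calc (Nat.card S : ℝ) ≤ ((4 ^ p * (M + 2) ^ n : ℕ) : ℝ) := by exact_mod_cast this
      _ = 4 ^ p * ((M:ℝ) + 2) ^ n := by push_cast; ring
  have hM2 : ((M:ℝ) + 2) ≤ 3 * M := by
    have h1 : (1:ℝ) ≤ M := by exact_mod_cast hM0
    linarith
  have e1 : ((M:ℝ) + 2) ^ n ≤ 3 ^ n * (x + 1) ^ n := by
    calc ((M:ℝ) + 2) ^ n ≤ (3 * (M:ℝ)) ^ n := pow_le_pow_left₀ (by positivity) hM2 n
      _ = 3 ^ n * (M:ℝ) ^ n := mul_pow _ _ _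
      _ ≤ 3 ^ n * (x + 1) ^ n := by
          have h1 : (M:ℝ) ^ n ≤ (x + 1) ^ n := pow_le_pow_left₀ hM0'.le hMle n
          have h2 : (0:ℝ) ≤ 3 ^ n := by positivity
          exact mul_le_mul_of_nonneg_left h1 h2
  have e2 : (x + 1) ^ n ≤ 2 ^ n * (x ^ n + 1) := by
    have hmax : x + 1 ≤ 2 * max x 1 := by
      rcases le_total x 1 with h | h
      · rw [max_eq_right h]; linarith
      · rw [max_eq_left h]; linarith
    calc (x + 1) ^ n ≤ (2 * max x 1) ^ n := pow_le_pow_left₀ (by positivity) hmax n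
      _ = 2 ^ n * (max x 1) ^ n := mul_pow _ _ _
      _ ≤ 2 ^ n * (x ^ n + 1) := by
          have hm : (max x 1) ^ n ≤ x ^ n + 1 := by
            rcases le_total x 1 with h | h
            · rw [max_eq_right h, one_pow]
              have : (0:ℝ) ≤ x ^ n := pow_nonneg hx.le n
              linarith
            · rw [max_eq_left h]
              linarith
          have h2 : (0:ℝ) ≤ 2 ^ n := by positivity
          exact mul_le_mul_of_nonneg_left hm h2
  have hRval : R = Real.sqrt 2 ^ n * (∏ w : InfinitePlace K, c w) ^ ((1:ℝ)/2) := by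
    have hterm : ∀ w : InfinitePlace K,
        D w ^ w.mult = Real.sqrt 2 ^ w.mult * (c w) ^ ((1:ℝ)/2) := by
      intro w
      have hm : ((w.mult : ℝ)) ≠ 0 := by exact_mod_cast NumberField.InfinitePlace.mult_ne_zero
      simp only [hDdef]
      rw [mul_pow]
      congr 1
      rw [← Real.rpow_natCast ((c w) ^ ((1:ℝ)/(2 * (w.mult:ℝ)))) w.mult,
        ← Real.rpow_mul (hc w).le]
      congr 1
      field_simp
    rw [hRdef, Finset.prod_congr rfl (fun w _ => hterm w), Finset.prod_mul_distrib,
      Finset.prod_pow_eq_pow_sum, NumberField.InfinitePlace.sum_mult_eq, ← hn,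
      Real.finset_prod_rpow _ _ (fun w _ => (hc w).le) _]
  have hxnval : x ^ n = (2 * 4 ^ n * Real.sqrt 2 ^ n)
      * ((∏ w : InfinitePlace K, c w) ^ ((1:ℝ)/2) / N) := by
    rw [hxn, hRval]; ring
  have hrpos : (0:ℝ) ≤ (∏ w : InfinitePlace K, c w) ^ ((1:ℝ)/2) / N := by
    have : (0:ℝ) < ∏ w : InfinitePlace K, c w := Finset.prod_pos fun w _ => hc w
    positivity
  calc (Nat.card S : ℝ) ≤ 4 ^ p * ((M:ℝ) + 2) ^ n := hcardR
    _ ≤ 4 ^ p * (3 ^ n * (x + 1) ^ n) := by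
        have h2 : (0:ℝ) ≤ 4 ^ p := by positivity
        exact mul_le_mul_of_nonneg_left e1 h2
    _ ≤ 4 ^ p * (3 ^ n * (2 ^ n * (x ^ n + 1))) := by
        have h2 : (0:ℝ) ≤ (4:ℝ) ^ p * 3 ^ n := by positivity
        nlinarith [e2, pow_nonneg (by norm_num : (0:ℝ) ≤ 3) n, pow_nonneg (by norm_num : (0:ℝ) ≤ 4) p]
    _ = 4 ^ p * 3 ^ n * 2 ^ n * (x ^ n + 1) := by ring
    _ ≤ (4 ^ p * 3 ^ n * 2 ^ n) * ((2 * 4 ^ n * Real.sqrt 2 ^ n) + 1)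
        * ((∏ w : InfinitePlace K, c w) ^ ((1:ℝ)/2) / N + 1) := by
        rw [hxnval]
        have hA : (0:ℝ) < 4 ^ p * 3 ^ n * 2 ^ n := by positivity
        have hB : (0:ℝ) ≤ 2 * 4 ^ n * Real.sqrt 2 ^ n := by positivity
        nlinarith [hrpos, mul_nonneg hB hrpos]

end ManinSplitTorsor
end
end

section
/- Let v be a real place of K and let α = σ_v(a) ∈ ℝ be the image of a under the corresponding embedding. Then ∫_{ℝ²} dx₁ dx₃ / (|x₃| · max{|α x₃² − x₁²|, |x₁|, |x₃|^{-1}, |x₃|, 1}) = (3/2) · vol{(y₅,y₆,y₇) ∈ ℝ³ : max{|y₆(α y₆² − y₇²)|, |y₅y₆y₇|, |y₅³|, |y₅y₆²|, |y₅²y₆|} ≤ 1}, where both sides are finite; the integral is with respect to Lebesgue measure on ℝ², ignoring the null set {x₃ = 0}, and vol denotes Lebesgue measure on ℝ³. -/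
open NumberField

noncomputable section

namespace ManinSplitTorsor

variable {K : Type*} [Field K] [NumberField K]

section RealPlaceAux

open MeasureTheory Set
open scoped ENNReal

lemma lint_scale (f : ℝ → ℝ≥0∞) (hf : Measurable f) {c : ℝ} (hc : c ≠ 0) :
    ∫⁻ x, f x = ENNReal.ofReal |c| * ∫⁻ x, f (c * x) := by
  have h1 : ∫⁻ x, f (c * x) = ∫⁻ y, f y ∂(Measure.map (c * ·) volume) :=
    (lintegral_map hf (measurable_const_mul c)).symm
  rw [h1, Real.map_volume_mul_left hc, lintegral_smul_measure, smul_eq_mul, ← mul_assoc,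
    ← ENNReal.ofReal_mul (abs_nonneg _), ← abs_mul, mul_inv_cancel₀ hc, abs_one,
    ENNReal.ofReal_one, one_mul]

def Mf (α v w : ℝ) : ℝ :=
  max (max (max (max (|v| ^ 3 * |α - w ^ 2|) (v ^ 2 * |w|)) 1) (v ^ 2)) |v|

lemma Mf_def (α v w : ℝ) : Mf α v w
  = max (max (max (max (|v| ^ 3 * |α - w ^ 2|) (v ^ 2 * |w|)) 1) (v ^ 2)) |v| := rfl

lemma one_le_Mf (α v w : ℝ) : 1 ≤ Mf α v w :=
  le_max_of_le_left <| le_max_of_le_left <| le_max_right _ _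

lemma Mf_pos (α v w : ℝ) : 0 < Mf α v w := lt_of_lt_of_le one_pos (one_le_Mf α v w)

lemma Mf_meas (α : ℝ) : Measurable fun p : ℝ × ℝ => Mf α p.1 p.2 := by
  unfold Mf; fun_prop

lemma key1 (α v w : ℝ) (hv : v ≠ 0) :
    |v| * max (max (max (max (|α * v ^ 2 - (v * w) ^ 2|) (|v * w|)) (|v|⁻¹)) (|v|)) 1
      = Mf α v w := by
  have hv' : (0:ℝ) < |v| := abs_pos.2 hv
  rw [mul_max_of_nonneg _ _ hv'.le, mul_max_of_nonneg _ _ hv'.le,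
    mul_max_of_nonneg _ _ hv'.le, mul_max_of_nonneg _ _ hv'.le]
  unfold Mf
  congr 1
  · congr 1
    · congr 1
      · congr 1
        · have : α * v ^ 2 - (v * w) ^ 2 = v ^ 2 * (α - w ^ 2) := by ring
          rw [this, abs_mul, abs_pow, sq_abs, ← sq_abs v]; ring
        · rw [abs_mul, ← sq_abs v]; ring
      · exact mul_inv_cancel₀ hv'.ne'
    · rw [← sq_abs]; ring
  · exact mul_one _

lemma key2 (α u v w : ℝ) :
    max (max (max (max (|u * v * (α * (u * v) ^ 2 - (u * v * w) ^ 2)|)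
      (|u * (u * v) * (u * v * w)|)) (|u ^ 3|)) (|u * (u * v) ^ 2|)) (|u ^ 2 * (u * v)|)
      = |u| ^ 3 * Mf α v w := by
  unfold Mf
  rw [mul_max_of_nonneg, mul_max_of_nonneg, mul_max_of_nonneg, mul_max_of_nonneg]
  · congr 1
    · congr 1
      · congr 1
        · congr 1
          · have : u * v * (α * (u * v) ^ 2 - (u * v * w) ^ 2)
                = (u^3) * (v^3 * (α - w ^ 2)) := by ring
            rw [this, abs_mul, abs_mul, abs_pow, abs_pow]
          · have : u * (u * v) * (u * v * w) = u^3 * (v^2 * w) := by ring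
            rw [this, abs_mul, abs_mul, abs_pow v 2, sq_abs, abs_pow u 3]
        · rw [abs_pow, mul_one]
      · have : u * (u*v)^2 = u^3 * v^2 := by ring
        rw [this, abs_mul, abs_pow u 3, abs_pow v 2, sq_abs]
    · have : u^2 * (u*v) = u^3 * v := by ring
      rw [this, abs_mul, abs_pow]
  all_goals positivity

lemma h0ae : ∀ᵐ v : ℝ, v ≠ 0 := by
  have h : {a : ℝ | ¬ a ≠ 0} = {0} := by ext; simp
  rw [MeasureTheory.ae_iff, h]
  exact measure_singleton 0

lemma u_int (m : ℝ) (hm : 1 ≤ m) :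
    ∫⁻ u : ℝ, (ENNReal.ofReal (u ^ 2) * if |u| ^ 3 * m ≤ 1 then 1 else 0)
      = ENNReal.ofReal (2 / 3 * m⁻¹) := by
  have hm0 : (0:ℝ) < m := lt_of_lt_of_le one_pos hm
  set r : ℝ := m ^ (-(1/3) : ℝ) with hr
  have hrpos : 0 < r := Real.rpow_pos_of_pos hm0 _
  have hr3 : r ^ 3 = m⁻¹ := by
    rw [hr, ← Real.rpow_natCast (m ^ (-(1/3):ℝ)) 3, ← Real.rpow_mul hm0.le]
    norm_num [Real.rpow_neg_one]
  have hcond : ∀ u : ℝ, (|u| ^ 3 * m ≤ 1) ↔ u ∈ Icc (-r) r := by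
    intro u
    rw [mem_Icc, ← abs_le]
    rw [← pow_le_pow_iff_left₀ (abs_nonneg u) hrpos.le (three_ne_zero), hr3,
      ← le_div_iff₀ hm0, one_div]
  have : (fun u : ℝ => ENNReal.ofReal (u ^ 2) * if |u| ^ 3 * m ≤ 1 then (1:ℝ≥0∞) else 0)
      = (Icc (-r) r).indicator (fun u => ENNReal.ofReal (u ^ 2)) := by
    funext u
    rw [Set.indicator_apply]
    by_cases h : |u| ^ 3 * m ≤ 1
    · rw [if_pos h, if_pos ((hcond u).mp h), mul_one]
    · rw [if_neg h, if_neg (fun hh => h ((hcond u).mpr hh)), mul_zero]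
  rw [this, lintegral_indicator measurableSet_Icc,
    ← ofReal_integral_eq_lintegral_ofReal
      ((continuous_pow 2).integrableOn_Icc)
      (Filter.Eventually.of_forall fun x => sq_nonneg x)]
  congr 1
  rw [integral_Icc_eq_integral_Ioc, ← intervalIntegral.integral_of_le (by linarith),
    integral_pow]
  have : (-r) ^ (2+1) = -(r^(2+1)) := Odd.neg_pow (by decide) r
  rw [this]
  rw [show (2:ℕ)+1 = 3 from rfl, hr3]
  ring

lemma lint_prod₂ (f : ℝ × ℝ → ℝ≥0∞) (hf : Measurable f) :
    ∫⁻ z : ℝ × ℝ, f z = ∫⁻ x : ℝ, ∫⁻ y : ℝ, f (x, y) := by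
  rw [Measure.volume_eq_prod]
  exact lintegral_prod f hf.aemeasurable

lemma lint_prod₃ (f : ℝ × (ℝ × ℝ) → ℝ≥0∞) (hf : Measurable f) :
    ∫⁻ z : ℝ × ℝ × ℝ, f z = ∫⁻ x : ℝ, ∫⁻ p : ℝ × ℝ, f (x, p) := by
  rw [Measure.volume_eq_prod]
  exact lintegral_prod f hf.aemeasurable

lemma lint_prod₃_symm (f : ℝ × (ℝ × ℝ) → ℝ≥0∞) (hf : Measurable f) :
    ∫⁻ z : ℝ × ℝ × ℝ, f z = ∫⁻ p : ℝ × ℝ, ∫⁻ x : ℝ, f (x, p) := by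
  rw [Measure.volume_eq_prod]
  exact lintegral_prod_symm f hf.aemeasurable

lemma lhs_eq (α : ℝ) :
    (∫⁻ x : ℝ × ℝ, ENNReal.ofReal (1 / (|x.2| *
        max (max (max (max (|α * x.2 ^ 2 - x.1 ^ 2|) (|x.1|)) (|x.2|⁻¹)) (|x.2|)) 1)))
      = ∫⁻ p : ℝ × ℝ, ENNReal.ofReal (|p.1| / Mf α p.1 p.2) := by
  have hfm : Measurable (fun x : ℝ × ℝ => ENNReal.ofReal (1 / (|x.2| *
      max (max (max (max (|α * x.2 ^ 2 - x.1 ^ 2|) (|x.1|)) (|x.2|⁻¹)) (|x.2|)) 1))) := by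
    fun_prop
  have hgm : Measurable (fun p : ℝ × ℝ => ENNReal.ofReal (|p.1| / Mf α p.1 p.2)) := by
    have := Mf_meas α
    fun_prop
  rw [Measure.volume_eq_prod,
    lintegral_prod_symm' _ hfm, lintegral_prod _ hgm.aemeasurable]
  have h0 : ∀ᵐ v : ℝ, v ≠ 0 := by
    have : {a : ℝ | ¬ a ≠ 0} = {0} := by ext; simp
    rw [ae_iff, this]; exact measure_singleton 0
  refine lintegral_congr_ae (h0.mono fun v hv => ?_)
  dsimp only
  have hmeas1 : Measurable (fun x₁ : ℝ => ENNReal.ofReal (1 / (|v| *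
      max (max (max (max (|α * v ^ 2 - x₁ ^ 2|) (|x₁|)) (|v|⁻¹)) (|v|)) 1))) := by fun_prop
  rw [lint_scale _ hmeas1 hv, ← lintegral_const_mul' _ _ ENNReal.ofReal_ne_top]
  refine lintegral_congr fun w => ?_
  rw [← ENNReal.ofReal_mul (abs_nonneg v)]
  congr 1
  rw [← key1 α v w hv, mul_one_div]

set_option maxHeartbeats 2000000 in
lemma vol_eq (α : ℝ) :
    volume {y : ℝ × ℝ × ℝ |
        max (max (max (max (|y.2.1 * (α * y.2.1 ^ 2 - y.2.2 ^ 2)|)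
          (|y.1 * y.2.1 * y.2.2|)) (|y.1 ^ 3|)) (|y.1 * y.2.1 ^ 2|)) (|y.1 ^ 2 * y.2.1|)
        ≤ 1}
      = ENNReal.ofReal (2/3) * ∫⁻ p : ℝ × ℝ, ENNReal.ofReal (|p.1| / Mf α p.1 p.2) := by
  have hMfm := Mf_meas α
  set G : ℝ × ℝ × ℝ → ℝ := fun y =>
    max (max (max (max (|y.2.1 * (α * y.2.1 ^ 2 - y.2.2 ^ 2)|)
      (|y.1 * y.2.1 * y.2.2|)) (|y.1 ^ 3|)) (|y.1 * y.2.1 ^ 2|)) (|y.1 ^ 2 * y.2.1|)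
    with hG
  have hGm : Measurable G := by rw [hG]; fun_prop
  have hSm : MeasurableSet {y : ℝ × ℝ × ℝ | G y ≤ 1} :=
    measurableSet_le hGm measurable_const
  have hχm : Measurable (fun z : ℝ × ℝ × ℝ => if G z ≤ 1 then (1:ℝ≥0∞) else 0) :=
    Measurable.ite hSm measurable_const measurable_const
  have hHm : Measurable (fun z : ℝ × (ℝ × ℝ) =>
      ENNReal.ofReal (z.1 ^ 2 * |z.2.1|) *
        if |z.1| ^ 3 * Mf α z.2.1 z.2.2 ≤ 1 then (1:ℝ≥0∞) else 0) := by
    refine Measurable.mul (by fun_prop) (Measurable.ite ?_ measurable_const measurable_const)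
    exact measurableSet_le (by fun_prop) measurable_const
  calc volume {y : ℝ × ℝ × ℝ | G y ≤ 1}
      = ∫⁻ y : ℝ × ℝ × ℝ, if G y ≤ 1 then 1 else 0 := by
        rw [← lintegral_indicator_one hSm]
        refine lintegral_congr fun y => ?_
        by_cases h : G y ≤ 1 <;> simp [Set.indicator_apply, Set.mem_setOf_eq, h]
    _ = ∫⁻ u : ℝ, ∫⁻ bc : ℝ × ℝ, (if G (u, bc) ≤ 1 then 1 else 0) :=
        lint_prod₃ _ hχm
    _ = ∫⁻ u : ℝ, ∫⁻ p : ℝ × ℝ, (ENNReal.ofReal (u ^ 2 * |p.1|) *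
          if |u| ^ 3 * Mf α p.1 p.2 ≤ 1 then 1 else 0) := by
        refine lintegral_congr_ae (h0ae.mono fun u hu => ?_)
        dsimp only
        have hχmu : Measurable (fun bc : ℝ × ℝ => if G (u, bc) ≤ 1 then (1:ℝ≥0∞) else 0) :=
          hχm.comp (by fun_prop)
        have hmb : Measurable
            (fun b : ℝ => ∫⁻ c : ℝ, (if G (u, b, c) ≤ 1 then (1:ℝ≥0∞) else 0)) := by
          have h2 : Measurable (fun bc : ℝ × ℝ => if G (u, bc.1, bc.2) ≤ 1 then (1:ℝ≥0∞) else 0) :=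
            hχm.comp (by fun_prop)
          exact h2.lintegral_prod_right'
        have hHmu : Measurable (fun p : ℝ × ℝ => ENNReal.ofReal (u ^ 2 * |p.1|) *
            if |u| ^ 3 * Mf α p.1 p.2 ≤ 1 then (1:ℝ≥0∞) else 0) := by
          have := hHm.comp (show Measurable fun p : ℝ × ℝ => ((u, p) : ℝ × (ℝ × ℝ)) from
            measurable_const.prodMk measurable_id)
          exact this
        calc (∫⁻ bc : ℝ × ℝ, (if G (u, bc) ≤ 1 then (1:ℝ≥0∞) else 0))
            = ∫⁻ b : ℝ, ∫⁻ c : ℝ, (if G (u, b, c) ≤ 1 then (1:ℝ≥0∞) else 0) :=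
              lint_prod₂ _ hχmu
          _ = ENNReal.ofReal |u| * ∫⁻ v : ℝ, ∫⁻ c : ℝ,
                (if G (u, u * v, c) ≤ 1 then (1:ℝ≥0∞) else 0) := lint_scale _ hmb hu
          _ = ENNReal.ofReal |u| * ∫⁻ v : ℝ, ENNReal.ofReal |u * v| * ∫⁻ w : ℝ,
                (if |u| ^ 3 * Mf α v w ≤ 1 then (1:ℝ≥0∞) else 0) := by
              congr 1
              refine lintegral_congr_ae (h0ae.mono fun v hv => ?_)
              dsimp only
              have huv : u * v ≠ 0 := mul_ne_zero hu hv
              have hmc : Measurable (fun c : ℝ => if G (u, u * v, c) ≤ 1 then (1:ℝ≥0∞) else 0) :=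
                hχm.comp (by fun_prop)
              rw [lint_scale _ hmc huv]
              congr 1
              refine lintegral_congr fun w => ?_
              rw [show G (u, u * v, u * v * w) = |u| ^ 3 * Mf α v w from key2 α u v w]
          _ = ∫⁻ p : ℝ × ℝ, (ENNReal.ofReal (u ^ 2 * |p.1|) *
                if |u| ^ 3 * Mf α p.1 p.2 ≤ 1 then 1 else 0) := by
              rw [lint_prod₂ _ hHmu, ← lintegral_const_mul' _ _ ENNReal.ofReal_ne_top]
              refine lintegral_congr fun v => ?_
              dsimp only
              rw [lintegral_const_mul' (ENNReal.ofReal (u ^ 2 * |v|)) _ ENNReal.ofReal_ne_top,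
                ← mul_assoc, ← ENNReal.ofReal_mul (abs_nonneg u)]
              congr 2
              rw [abs_mul, ← mul_assoc, ← sq_abs u]
              ring
    _ = ∫⁻ z : ℝ × (ℝ × ℝ), (ENNReal.ofReal (z.1 ^ 2 * |z.2.1|) *
          if |z.1| ^ 3 * Mf α z.2.1 z.2.2 ≤ 1 then 1 else 0) := (lint_prod₃ _ hHm).symm
    _ = ∫⁻ p : ℝ × ℝ, ∫⁻ u : ℝ, (ENNReal.ofReal (u ^ 2 * |p.1|) *
          if |u| ^ 3 * Mf α p.1 p.2 ≤ 1 then 1 else 0) := lint_prod₃_symm _ hHm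
    _ = ∫⁻ p : ℝ × ℝ, ENNReal.ofReal (2/3) * ENNReal.ofReal (|p.1| / Mf α p.1 p.2) := by
        refine lintegral_congr fun p => ?_
        have h1 : ∀ u : ℝ, ENNReal.ofReal (u ^ 2 * |p.1|) = ENNReal.ofReal |p.1| *
            ENNReal.ofReal (u ^ 2) := fun u => by
          rw [← ENNReal.ofReal_mul (abs_nonneg _), mul_comm]
        simp_rw [h1, mul_assoc]
        rw [lintegral_const_mul' _ _ ENNReal.ofReal_ne_top, u_int _ (one_le_Mf α p.1 p.2),
          ← ENNReal.ofReal_mul (abs_nonneg _), ← ENNReal.ofReal_mul (by norm_num : (0:ℝ) ≤ 2/3)]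
        congr 1
        field_simp
    _ = ENNReal.ofReal (2/3) * ∫⁻ p : ℝ × ℝ, ENNReal.ofReal (|p.1| / Mf α p.1 p.2) :=
        lintegral_const_mul' _ _ ENNReal.ofReal_ne_top


lemma lint_neg (f : ℝ → ℝ≥0∞) (hf : Measurable f) : ∫⁻ x, f (-x) = ∫⁻ x, f x := by
  conv_rhs => rw [← Measure.map_neg_eq_self (volume : Measure ℝ)]
  rw [lintegral_map hf measurable_neg]

lemma lint_reflect (f : ℝ → ℝ≥0∞) (hf : Measurable f) (s : Set ℝ) (hs : MeasurableSet s) :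
    ∫⁻ x in s, f x = ∫⁻ x in (fun x : ℝ => -x) ⁻¹' s, f (-x) := by
  rw [← lintegral_indicator hs, ← lintegral_indicator (hs.preimage measurable_neg)]
  rw [← lint_neg (s.indicator f) (hf.indicator hs)]
  refine lintegral_congr fun x => ?_
  by_cases h : -x ∈ s
  · rw [Set.indicator_of_mem h, Set.indicator_of_mem (by exact h)]
  · rw [Set.indicator_of_notMem h, Set.indicator_of_notMem (by exact h)]

lemma tail_fin (r : ℝ) (hr : r < -1) (c : ℝ) (hc : 0 < c) :
    ∫⁻ x in {x : ℝ | c ≤ |x|}, ENNReal.ofReal (|x| ^ r) < ⊤ := by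
  have hmeas : Measurable fun x : ℝ => ENNReal.ofReal (|x| ^ r) := by fun_prop
  have hIci : ∫⁻ x in Ici c, ENNReal.ofReal (|x| ^ r) < ⊤ := by
    have h1 : ∫⁻ x in Ici c, ENNReal.ofReal (|x| ^ r)
        = ∫⁻ x in Ioi c, ENNReal.ofReal (x ^ r) := by
      rw [setLIntegral_congr (Ioi_ae_eq_Ici (a := c) (μ := volume)).symm]
      refine setLIntegral_congr_fun measurableSet_Ioi (fun x hx => ?_)
      rw [abs_of_pos (hc.trans hx)]
    rw [h1, ← ofReal_integral_eq_lintegral_ofReal (integrableOn_Ioi_rpow_of_lt hr hc)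
      ((ae_restrict_iff' measurableSet_Ioi).2 (ae_of_all _ fun x hx =>
        Real.rpow_nonneg (hc.trans hx).le r))]
    exact ENNReal.ofReal_lt_top
  have hset : {x : ℝ | c ≤ |x|} = Iic (-c) ∪ Ici c := by
    ext x
    simp only [mem_setOf_eq, mem_union, mem_Iic, mem_Ici, le_abs]
    constructor
    · rintro (h | h)
      · right; exact h
      · left; linarith
    · rintro (h | h)
      · right; linarith
      · left; exact h
  have hIic : ∫⁻ x in Iic (-c), ENNReal.ofReal (|x| ^ r) < ⊤ := by
    rw [lint_reflect _ hmeas _ measurableSet_Iic]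
    have hpre : (fun x : ℝ => -x) ⁻¹' Iic (-c) = Ici c := by
      ext x; simp only [mem_preimage, mem_Iic, mem_Ici]; constructor <;> intro h <;> linarith
    rw [hpre]
    simpa [abs_neg] using hIci
  rw [hset]
  calc ∫⁻ x in Iic (-c) ∪ Ici c, ENNReal.ofReal (|x| ^ r)
      ≤ (∫⁻ x in Iic (-c), ENNReal.ofReal (|x| ^ r))
        + ∫⁻ x in Ici c, ENNReal.ofReal (|x| ^ r) := lintegral_union_le _ _ _
    _ < ⊤ := ENNReal.add_lt_top.2 ⟨hIic, hIci⟩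

lemma core_fin (r : ℝ) (hr : -1 < r) :
    ∫⁻ x in Icc (-1 : ℝ) 1, ENNReal.ofReal (|x| ^ r) < ⊤ := by
  have hmeas : Measurable fun x : ℝ => ENNReal.ofReal (|x| ^ r) := by fun_prop
  have hIcc : ∫⁻ x in Icc (0:ℝ) 1, ENNReal.ofReal (|x| ^ r) < ⊤ := by
    have h1 : ∫⁻ x in Icc (0:ℝ) 1, ENNReal.ofReal (|x| ^ r)
        = ∫⁻ x in Ioc (0:ℝ) 1, ENNReal.ofReal (x ^ r) := by
      rw [setLIntegral_congr (Ioc_ae_eq_Icc (μ := volume)).symm]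
      refine setLIntegral_congr_fun measurableSet_Ioc (fun x hx => ?_)
      rw [abs_of_pos hx.1]
    rw [h1, ← ofReal_integral_eq_lintegral_ofReal (intervalIntegral.intervalIntegrable_rpow' hr).1
      ((ae_restrict_iff' measurableSet_Ioc).2 (ae_of_all _ fun x hx =>
        Real.rpow_nonneg hx.1.le r))]
    exact ENNReal.ofReal_lt_top
  have hneg : ∫⁻ x in Icc (-1 : ℝ) 0, ENNReal.ofReal (|x| ^ r) < ⊤ := by
    rw [lint_reflect _ hmeas _ measurableSet_Icc]
    have hpre : (fun x : ℝ => -x) ⁻¹' Icc (-1 : ℝ) 0 = Icc 0 1 := by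
      ext x
      simp only [mem_preimage, mem_Icc]
      constructor <;> intro h <;> constructor <;> linarith [h.1, h.2]
    rw [hpre]
    simpa [abs_neg] using hIcc
  have hsub : Icc (-1:ℝ) 1 ⊆ Icc (-1:ℝ) 0 ∪ Icc 0 1 := by
    intro x hx
    rcases le_or_gt x 0 with h | h
    · exact Or.inl ⟨hx.1, h⟩
    · exact Or.inr ⟨h.le, hx.2⟩
  calc ∫⁻ x in Icc (-1:ℝ) 1, ENNReal.ofReal (|x| ^ r)
      ≤ ∫⁻ x in Icc (-1:ℝ) 0 ∪ Icc 0 1, ENNReal.ofReal (|x| ^ r) :=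
        lintegral_mono_set hsub
    _ ≤ (∫⁻ x in Icc (-1:ℝ) 0, ENNReal.ofReal (|x| ^ r))
        + ∫⁻ x in Icc (0:ℝ) 1, ENNReal.ofReal (|x| ^ r) := lintegral_union_le _ _ _
    _ < ⊤ := ENNReal.add_lt_top.2 ⟨hneg, hIcc⟩

lemma min_le_rpow_mix (a b s t : ℝ) (ha : 0 ≤ a) (hb : 0 ≤ b) (hs : 0 ≤ s) (ht : 0 ≤ t)
    (hst : s + t = 1) : min a b ≤ a ^ s * b ^ t := by
  have hm : 0 ≤ min a b := le_min ha hb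
  calc min a b = min a b ^ (s + t) := by rw [hst, Real.rpow_one]
    _ = min a b ^ s * min a b ^ t := Real.rpow_add' hm (by rw [hst]; norm_num)
    _ ≤ a ^ s * b ^ t :=
        mul_le_mul (Real.rpow_le_rpow hm (min_le_left _ _) hs)
          (Real.rpow_le_rpow hm (min_le_right _ _) ht)
          (Real.rpow_nonneg hm t) (Real.rpow_nonneg ha s)

lemma sublevel (α : ℝ) (δ : ℝ) (hδ0 : 0 < δ) (hδ1 : δ ≤ 1) :
    volume {w : ℝ | |α - w ^ 2| < δ}
      ≤ ENNReal.ofReal ((2 + 4 / Real.sqrt |α|) * Real.sqrt δ) := by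
  have hsd : 0 < Real.sqrt δ := Real.sqrt_pos.2 hδ0
  rcases le_or_gt α 0 with hα | hα
  · have hsub : {w : ℝ | |α - w ^ 2| < δ} ⊆ Ioo (-Real.sqrt δ) (Real.sqrt δ) := by
      intro w hw
      simp only [mem_setOf_eq] at hw
      have h1 : w ^ 2 ≤ |α - w ^ 2| := by
        rw [abs_sub_comm, abs_of_nonneg (by nlinarith [sq_nonneg w])]
        nlinarith
      have h2 : w ^ 2 < δ := lt_of_le_of_lt h1 hw
      have h3 : |w| < Real.sqrt δ := by
        rw [← Real.sqrt_sq_eq_abs]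
        exact Real.sqrt_lt_sqrt (sq_nonneg w) h2
      exact mem_Ioo.2 ⟨neg_lt_of_abs_lt h3, lt_of_abs_lt h3⟩
    calc volume {w : ℝ | |α - w ^ 2| < δ} ≤ volume (Ioo (-Real.sqrt δ) (Real.sqrt δ)) :=
          measure_mono hsub
      _ = ENNReal.ofReal (2 * Real.sqrt δ) := by rw [Real.volume_Ioo]; ring_nf
      _ ≤ _ := by
          apply ENNReal.ofReal_le_ofReal
          have : 0 ≤ 4 / Real.sqrt |α| := by positivity
          nlinarith
  · set r := Real.sqrt α with hrdef
    have hr : 0 < r := Real.sqrt_pos.2 hα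
    have hr2 : r ^ 2 = α := Real.sq_sqrt hα.le
    set d := δ / r with hddef
    have hd : 0 < d := div_pos hδ0 hr
    have hsub : {w : ℝ | |α - w ^ 2| < δ} ⊆ Ioo (-r - d) (-r + d) ∪ Ioo (r - d) (r + d) := by
      intro w hw
      simp only [mem_setOf_eq] at hw
      have key : |(|w| - r)| < d := by
        have h1 : r * |(|w| - r)| ≤ |α - w ^ 2| := by
          have hwr : (0:ℝ) ≤ |w| + r := add_nonneg (abs_nonneg w) hr.le
          have habs2 : (|w| + r) * (|w| - r) = w ^ 2 - α := by
            rw [← hr2, ← sq_abs w]; ring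
          have heq : |α - w ^ 2| = (|w| + r) * |(|w| - r)| := by
            rw [← abs_of_nonneg hwr, ← abs_mul, habs2, abs_sub_comm]
          rw [heq]
          have h3 : r ≤ |w| + r := by
            have := abs_nonneg w; linarith
          nlinarith [abs_nonneg (|w| - r)]
        have h2 : r * |(|w| - r)| < δ := lt_of_le_of_lt h1 hw
        rwa [← lt_div_iff₀' hr] at h2
      rcases le_or_gt 0 w with hw0 | hw0
      · right
        rw [abs_of_nonneg hw0] at key
        have := abs_lt.1 key
        exact ⟨by linarith [this.1], by linarith [this.2]⟩
      · left
        rw [abs_of_neg hw0] at key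
        have h := abs_lt.1 key
        exact mem_Ioo.2 ⟨by linarith [h.1, h.2], by linarith [h.1, h.2]⟩
    calc volume {w : ℝ | |α - w ^ 2| < δ}
        ≤ volume (Ioo (-r - d) (-r + d)) + volume (Ioo (r - d) (r + d)) :=
          (measure_mono hsub).trans (measure_union_le _ _)
      _ = ENNReal.ofReal (2 * d) + ENNReal.ofReal (2 * d) := by
          rw [Real.volume_Ioo, Real.volume_Ioo]; ring_nf
      _ = ENNReal.ofReal (4 * d) := by
          rw [← ENNReal.ofReal_add (by positivity) (by positivity)]; ring_nf
      _ ≤ _ := by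
          apply ENNReal.ofReal_le_ofReal
          have habs : |α| = α := abs_of_pos hα
          have hδsd : δ ≤ Real.sqrt δ := by
            have h1 : Real.sqrt δ ≤ 1 := by
              rw [show (1:ℝ) = Real.sqrt 1 from (Real.sqrt_one).symm]
              exact Real.sqrt_le_sqrt hδ1
            nlinarith [Real.sq_sqrt hδ0.le]
          have h4 : 4 * d = 4 / r * δ := by rw [hddef]; ring
          rw [h4, habs, ← hrdef]
          have h5 : 4 / r * δ ≤ 4 / r * Real.sqrt δ :=
            mul_le_mul_of_nonneg_left hδsd (by positivity)
          have h6 : 0 ≤ 2 * Real.sqrt δ := by positivity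
          calc 4 / r * δ ≤ 4 / r * Real.sqrt δ := h5
            _ ≤ (2 + 4 / r) * Real.sqrt δ := by nlinarith
            _ = _ := by ring
  
lemma Mf_ge_cube (α v w : ℝ) (hw : Real.sqrt (2 * |α|) + 1 ≤ |w|) :
    |v| ^ 3 * (w ^ 2 / 2) ≤ Mf α v w := by
  have h1 : Real.sqrt (2 * |α|) ≤ |w| := by
    have := Real.sqrt_nonneg (2 * |α|); linarith
  have h2 : 2 * |α| ≤ w ^ 2 := by
    have := Real.sq_sqrt (by positivity : (0:ℝ) ≤ 2 * |α|)
    calc 2 * |α| = Real.sqrt (2 * |α|) ^ 2 := this.symm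
      _ ≤ |w| ^ 2 := by
          apply pow_le_pow_left₀ (Real.sqrt_nonneg _) h1
      _ = w ^ 2 := sq_abs w
  have h3 : w ^ 2 / 2 ≤ |α - w ^ 2| := by
    rw [abs_sub_comm]
    calc w ^ 2 / 2 ≤ w ^ 2 - |α| := by linarith
      _ ≤ w ^ 2 - α := by have := le_abs_self α; linarith
      _ ≤ |w ^ 2 - α| := le_abs_self _
  calc |v| ^ 3 * (w ^ 2 / 2) ≤ |v| ^ 3 * |α - w ^ 2| := by
        apply mul_le_mul_of_nonneg_left h3 (by positivity)
    _ ≤ Mf α v w := by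
        rw [Mf_def]
        exact le_max_of_le_left <| le_max_of_le_left <| le_max_of_le_left <| le_max_left _ _

lemma Mf_ge_sq (α v w : ℝ) : v ^ 2 ≤ Mf α v w := by
  rw [Mf_def]; exact le_max_of_le_left <| le_max_right _ _

lemma Mf_ge_cubeA (α v w : ℝ) : |v| ^ 3 * |α - w ^ 2| ≤ Mf α v w := by
  rw [Mf_def]
  exact le_max_of_le_left <| le_max_of_le_left <| le_max_of_le_left <| le_max_left _ _

set_option maxHeartbeats 2000000 in
lemma I_fin (α : ℝ) :
    (∫⁻ p : ℝ × ℝ, ENNReal.ofReal (|p.1| / Mf α p.1 p.2)) ≠ ⊤ := by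
  have hMfm := Mf_meas α
  set W : ℝ := Real.sqrt (2 * |α|) + 1 with hWdef
  have hW1 : (1:ℝ) ≤ W := by
    have := Real.sqrt_nonneg (2 * |α|); rw [hWdef]; linarith
  have hW0 : (0:ℝ) < W := lt_of_lt_of_le one_pos hW1
  set K : ℝ := 2 + 4 / Real.sqrt |α| with hKdef
  have hK0 : 0 ≤ K := by rw [hKdef]; positivity
  set J1 : ℝ≥0∞ := ∫⁻ w in {w : ℝ | W ≤ |w|}, ENNReal.ofReal (|w| ^ (-(6/5) : ℝ)) with hJ1
  set J2 : ℝ≥0∞ := ∫⁻ w in {w : ℝ | W ≤ |w|}, ENNReal.ofReal (|w| ^ (-(2:ℝ))) with hJ2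
  have hJ1fin : J1 < ⊤ := tail_fin _ (by norm_num) _ hW0
  have hJ2fin : J2 < ⊤ := tail_fin _ (by norm_num) _ hW0
  have hmeasW : MeasurableSet {w : ℝ | W ≤ |w|} :=
    measurableSet_le measurable_const (by fun_prop)
  set ΦA : ℝ → ℝ≥0∞ := fun v => ENNReal.ofReal (2 * W * |v|)
      + ENNReal.ofReal (2 * |v| ^ (-(4/5):ℝ)) * J1 with hΦA
  set ΦB : ℝ → ℝ≥0∞ := fun v => ENNReal.ofReal (K * |v| ^ (-(5/4):ℝ))
      + ENNReal.ofReal (2 * W * |v| ^ (-(3/2):ℝ))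
      + ENNReal.ofReal (2 * |v| ^ (-(2:ℝ))) * J2 with hΦB
  have hΦAm : Measurable ΦA := by rw [hΦA]; fun_prop
  have hΦBm : Measurable ΦB := by rw [hΦB]; fun_prop
  set Φ : ℝ → ℝ≥0∞ := fun v =>
      (Icc (-1:ℝ) 1).indicator ΦA v + ({v : ℝ | 1 < |v|}).indicator ΦB v with hΦ
  have hsetB : MeasurableSet {v : ℝ | 1 < |v|} :=
    measurableSet_lt measurable_const (by fun_prop)
  -- the inner bound
  have hinner : ∀ v : ℝ, v ≠ 0 →
      (∫⁻ w : ℝ, ENNReal.ofReal (|v| / Mf α v w)) ≤ Φ v := by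
    intro v hv
    have hv0 : (0:ℝ) < |v| := abs_pos.2 hv
    rcases le_or_gt |v| 1 with hv1 | hv1
    · -- case |v| ≤ 1
      have hb : ∀ w : ℝ, ENNReal.ofReal (|v| / Mf α v w)
          ≤ (Icc (-W) W).indicator (fun _ => ENNReal.ofReal |v|) w
            + ({w : ℝ | W ≤ |w|}).indicator
              (fun w => ENNReal.ofReal (2 * |v| ^ (-(4/5):ℝ) * |w| ^ (-(6/5):ℝ))) w := by
        intro w
        by_cases hw : |w| ≤ W
        · refine le_add_right ?_
          rw [Set.indicator_of_mem (by rw [mem_Icc, ← abs_le]; exact hw)]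
          exact ENNReal.ofReal_le_ofReal (div_le_self hv0.le (one_le_Mf α v w))
        · push_neg at hw
          refine le_add_left ?_
          rw [Set.indicator_of_mem (by exact hw.le)]
          apply ENNReal.ofReal_le_ofReal
          have hw1 : (1:ℝ) ≤ |w| := hW1.trans hw.le
          have hw0 : (0:ℝ) < |w| := lt_of_lt_of_le one_pos hw1
          have hwne : w ≠ 0 := by simpa [abs_pos] using hw0
          have hMc : |v| ^ 3 * (w ^ 2 / 2) ≤ Mf α v w := Mf_ge_cube α v w (by rw [← hWdef]; exact hw.le)
          have hMcpos : (0:ℝ) < |v| ^ 3 * (w ^ 2 / 2) := by positivity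
          have hb1 : |v| / Mf α v w ≤ |v| := div_le_self hv0.le (one_le_Mf α v w)
          have hb2 : |v| / Mf α v w ≤ 2 * |v| ^ (-(2:ℝ)) * |w| ^ (-(2:ℝ)) := by
            have h1 : |v| / Mf α v w ≤ |v| / (|v| ^ 3 * (w ^ 2 / 2)) :=
              div_le_div_of_nonneg_left hv0.le hMcpos hMc
            have h2 : |v| / (|v| ^ 3 * (w ^ 2 / 2)) = 2 * |v| ^ (-(2:ℝ)) * |w| ^ (-(2:ℝ)) := by
              rw [Real.rpow_neg hv0.le, Real.rpow_neg (abs_nonneg w),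
                Real.rpow_two, Real.rpow_two, ← sq_abs w]
              field_simp
            rw [← h2]; exact h1
          calc |v| / Mf α v w ≤ min (|v|) (2 * |v| ^ (-(2:ℝ)) * |w| ^ (-(2:ℝ))) :=
                le_min hb1 hb2
            _ ≤ |v| ^ (2/5 : ℝ) * (2 * |v| ^ (-(2:ℝ)) * |w| ^ (-(2:ℝ))) ^ (3/5 : ℝ) :=
                min_le_rpow_mix _ _ _ _ hv0.le (by positivity) (by norm_num) (by norm_num)
                  (by norm_num)
            _ ≤ 2 * |v| ^ (-(4/5):ℝ) * |w| ^ (-(6/5):ℝ) := by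
                rw [Real.mul_rpow (by positivity) (by positivity),
                  Real.mul_rpow (by norm_num) (by positivity),
                  ← Real.rpow_mul hv0.le, ← Real.rpow_mul (abs_nonneg w)]
                have e1 : (-(2:ℝ)) * (3/5 : ℝ) = -(6/5 : ℝ) := by norm_num
                rw [e1]
                have e2 : |v| ^ (2/5 : ℝ) * ((2:ℝ) ^ (3/5:ℝ) * |v| ^ (-(6/5):ℝ) * |w| ^ (-(6/5):ℝ))
                    = (2:ℝ) ^ (3/5:ℝ) * (|v| ^ (2/5 : ℝ) * |v| ^ (-(6/5):ℝ)) * |w| ^ (-(6/5):ℝ) := by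
                  ring
                rw [e2, ← Real.rpow_add hv0]
                have e3 : (2/5 : ℝ) + (-(6/5):ℝ) = -(4/5 : ℝ) := by norm_num
                rw [e3]
                apply mul_le_mul_of_nonneg_right _ (Real.rpow_nonneg (abs_nonneg w) _)
                apply mul_le_mul_of_nonneg_right _ (Real.rpow_nonneg (abs_nonneg v) _)
                calc (2:ℝ) ^ (3/5:ℝ) ≤ (2:ℝ) ^ (1:ℝ) :=
                      Real.rpow_le_rpow_of_exponent_le (by norm_num) (by norm_num)
                  _ = 2 := Real.rpow_one 2
      calc (∫⁻ w : ℝ, ENNReal.ofReal (|v| / Mf α v w)) ≤ _ := lintegral_mono hb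
        _ = ENNReal.ofReal |v| * volume (Icc (-W) W)
            + ∫⁻ w in {w : ℝ | W ≤ |w|},
                ENNReal.ofReal (2 * |v| ^ (-(4/5):ℝ) * |w| ^ (-(6/5):ℝ)) := by
            rw [lintegral_add_left ((measurable_const (a := ENNReal.ofReal |v|)).indicator
              measurableSet_Icc)]
            rw [lintegral_indicator measurableSet_Icc, lintegral_indicator hmeasW,
              setLIntegral_const]
        _ = ENNReal.ofReal (2 * W * |v|) + ENNReal.ofReal (2 * |v| ^ (-(4/5):ℝ)) * J1 := by
            congr 1
            · rw [Real.volume_Icc, ← ENNReal.ofReal_mul (abs_nonneg v)]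
              congr 1
              ring
            · rw [hJ1]
              rw [← lintegral_const_mul' _ _ ENNReal.ofReal_ne_top]
              refine setLIntegral_congr_fun hmeasW (fun w hw => ?_)
              rw [← ENNReal.ofReal_mul (by positivity)]
        _ ≤ Φ v := by
            have hvmem : v ∈ Icc (-1:ℝ) 1 := by rw [mem_Icc, ← abs_le]; exact hv1
            rw [hΦ]
            dsimp only
            rw [Set.indicator_of_mem hvmem]
            exact le_add_right le_rfl
    · -- case 1 < |v|
      set δ : ℝ := |v| ^ (-(1/2):ℝ) with hδdef
      have hδ0 : 0 < δ := Real.rpow_pos_of_pos hv0 _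
      have hδ1 : δ ≤ 1 := Real.rpow_le_one_of_one_le_of_nonpos hv1.le (by norm_num)
      have hS1m : MeasurableSet {w : ℝ | |w| ≤ W ∧ |α - w ^ 2| < δ} := by
        apply MeasurableSet.inter
        · exact measurableSet_le measurable_abs measurable_const
        · exact measurableSet_lt
            ((measurable_const.sub (measurable_id.pow_const 2)).abs) measurable_const
      have hb : ∀ w : ℝ, ENNReal.ofReal (|v| / Mf α v w)
          ≤ ({w : ℝ | |w| ≤ W ∧ |α - w ^ 2| < δ}).indicator
              (fun _ => ENNReal.ofReal (|v|⁻¹)) w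
            + (Icc (-W) W).indicator (fun _ => ENNReal.ofReal (|v| ^ (-(3/2):ℝ))) w
            + ({w : ℝ | W ≤ |w|}).indicator
              (fun w => ENNReal.ofReal (2 * |v| ^ (-(2:ℝ)) * |w| ^ (-(2:ℝ)))) w := by
        intro w
        by_cases hw : |w| ≤ W
        · by_cases hd : |α - w ^ 2| < δ
          · refine le_add_right (le_add_right ?_)
            rw [Set.indicator_of_mem (by exact ⟨hw, hd⟩)]
            apply ENNReal.ofReal_le_ofReal
            have h1 : |v| / Mf α v w ≤ |v| / v ^ 2 :=
              div_le_div_of_nonneg_left hv0.le (by positivity) (Mf_ge_sq α v w)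
            have h2 : |v| / v ^ 2 = |v|⁻¹ := by
              rw [← sq_abs]; field_simp
            rw [← h2]; exact h1
          · push_neg at hd
            refine le_add_right (le_add_left ?_)
            rw [Set.indicator_of_mem (by rw [mem_Icc, ← abs_le]; exact hw)]
            apply ENNReal.ofReal_le_ofReal
            have hMc : |v| ^ 3 * δ ≤ Mf α v w := by
              calc |v| ^ 3 * δ ≤ |v| ^ 3 * |α - w ^ 2| := by
                    apply mul_le_mul_of_nonneg_left hd (by positivity)
                _ ≤ Mf α v w := Mf_ge_cubeA α v w
            have h1 : |v| / Mf α v w ≤ |v| / (|v| ^ 3 * δ) :=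
              div_le_div_of_nonneg_left hv0.le (by positivity) hMc
            have h2 : |v| / (|v| ^ 3 * δ) = |v| ^ (-(3/2):ℝ) := by
              have e1 : |v| ^ 3 * δ = |v| ^ ((5/2 : ℝ)) := by
                rw [hδdef, show |v| ^ 3 = |v| ^ ((3:ℕ):ℝ) from (Real.rpow_natCast _ 3).symm,
                  ← Real.rpow_add hv0]
                norm_num
              rw [e1, show (-(3/2):ℝ) = 1 - 5/2 by norm_num, Real.rpow_sub hv0, Real.rpow_one]
            rw [← h2]; exact h1
        · push_neg at hw
          refine le_add_left ?_
          rw [Set.indicator_of_mem (by exact hw.le)]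
          apply ENNReal.ofReal_le_ofReal
          have hw1 : (1:ℝ) ≤ |w| := hW1.trans hw.le
          have hw0 : (0:ℝ) < |w| := lt_of_lt_of_le one_pos hw1
          have hwne : w ≠ 0 := by simpa [abs_pos] using hw0
          have hMc : |v| ^ 3 * (w ^ 2 / 2) ≤ Mf α v w :=
            Mf_ge_cube α v w (by rw [← hWdef]; exact hw.le)
          have h1 : |v| / Mf α v w ≤ |v| / (|v| ^ 3 * (w ^ 2 / 2)) :=
            div_le_div_of_nonneg_left hv0.le (by positivity) hMc
          have h2 : |v| / (|v| ^ 3 * (w ^ 2 / 2)) = 2 * |v| ^ (-(2:ℝ)) * |w| ^ (-(2:ℝ)) := by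
            rw [Real.rpow_neg hv0.le, Real.rpow_neg (abs_nonneg w),
              Real.rpow_two, Real.rpow_two, ← sq_abs w]
            field_simp
          rw [← h2]; exact h1
      calc (∫⁻ w : ℝ, ENNReal.ofReal (|v| / Mf α v w)) ≤ _ := lintegral_mono hb
        _ = ENNReal.ofReal (|v|⁻¹) * volume {w : ℝ | |w| ≤ W ∧ |α - w ^ 2| < δ}
            + ENNReal.ofReal (|v| ^ (-(3/2):ℝ)) * volume (Icc (-W) W)
            + ENNReal.ofReal (2 * |v| ^ (-(2:ℝ))) * J2 := by
            rw [lintegral_add_left (f := fun a =>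
                {w : ℝ | |w| ≤ W ∧ |α - w ^ 2| < δ}.indicator (fun _ => ENNReal.ofReal (|v|⁻¹)) a
                + (Icc (-W) W).indicator (fun _ => ENNReal.ofReal (|v| ^ (-(3/2):ℝ))) a)
                (((measurable_const (a := ENNReal.ofReal |v|⁻¹)).indicator
                hS1m).add ((measurable_const).indicator measurableSet_Icc))]
            rw [lintegral_add_left ((measurable_const (a := ENNReal.ofReal |v|⁻¹)).indicator
                hS1m)]
            rw [lintegral_indicator hS1m, lintegral_indicator measurableSet_Icc,
              lintegral_indicator hmeasW, setLIntegral_const, setLIntegral_const]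
            congr 1
            rw [hJ2, ← lintegral_const_mul' _ _ ENNReal.ofReal_ne_top]
            refine setLIntegral_congr_fun hmeasW (fun w hw => ?_)
            rw [← ENNReal.ofReal_mul (by positivity)]
        _ ≤ ENNReal.ofReal (K * |v| ^ (-(5/4):ℝ))
            + ENNReal.ofReal (2 * W * |v| ^ (-(3/2):ℝ))
            + ENNReal.ofReal (2 * |v| ^ (-(2:ℝ))) * J2 := by
            gcongr
            · calc ENNReal.ofReal (|v|⁻¹) * volume {w : ℝ | |w| ≤ W ∧ |α - w ^ 2| < δ}
                  ≤ ENNReal.ofReal (|v|⁻¹) * ENNReal.ofReal (K * Real.sqrt δ) := by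
                    gcongr
                    refine (measure_mono ?_).trans (sublevel α δ hδ0 hδ1)
                    intro w hw; exact hw.2
                _ = ENNReal.ofReal (K * |v| ^ (-(5/4):ℝ)) := by
                    rw [← ENNReal.ofReal_mul (by positivity)]
                    congr 1
                    rw [hδdef, Real.sqrt_eq_rpow, ← Real.rpow_mul (abs_nonneg v)]
                    rw [show |v|⁻¹ = |v| ^ (-(1:ℝ)) by rw [Real.rpow_neg_one]]
                    rw [show (-(1/2):ℝ) * (1/2) = -(1/4 : ℝ) by norm_num]
                    rw [mul_comm (|v| ^ (-(1:ℝ))) _, mul_assoc, ← Real.rpow_add hv0]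
                    norm_num
            · rw [Real.volume_Icc, ← ENNReal.ofReal_mul (Real.rpow_nonneg (abs_nonneg v) _)]
              apply ENNReal.ofReal_le_ofReal
              exact le_of_eq (by ring)
        _ ≤ Φ v := by
            have hnot : v ∉ Icc (-1:ℝ) 1 := by rw [mem_Icc, ← abs_le]; exact not_le.2 hv1
            rw [hΦ]
            dsimp only
            rw [Set.indicator_of_notMem hnot, Set.indicator_of_mem (by exact hv1), zero_add]
  -- now finish
  have hIm : Measurable fun p : ℝ × ℝ => ENNReal.ofReal (|p.1| / Mf α p.1 p.2) :=
    (measurable_fst.abs.div hMfm).ennreal_ofReal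
  rw [lint_prod₂ _ hIm]
  have hle : (∫⁻ v : ℝ, ∫⁻ w : ℝ, ENNReal.ofReal (|v| / Mf α v w)) ≤ ∫⁻ v, Φ v :=
    lintegral_mono_ae (h0ae.mono fun v hv => hinner v hv)
  refine ne_top_of_le_ne_top ?_ hle
  have hA : (∫⁻ v in Icc (-1:ℝ) 1, ΦA v) < ⊤ := by
    rw [hΦA]
    have hm1 : Measurable fun v : ℝ => ENNReal.ofReal (2 * W * |v|) := by fun_prop
    rw [lintegral_add_left hm1]
    refine ENNReal.add_lt_top.2 ⟨?_, ?_⟩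
    · calc (∫⁻ v in Icc (-1:ℝ) 1, ENNReal.ofReal (2 * W * |v|))
          ≤ ∫⁻ _ in Icc (-1:ℝ) 1, ENNReal.ofReal (2 * W) := by
            refine setLIntegral_mono measurable_const fun x hx => ?_
            apply ENNReal.ofReal_le_ofReal
            have : |x| ≤ 1 := by rw [abs_le]; exact ⟨hx.1, hx.2⟩
            nlinarith
        _ = ENNReal.ofReal (2 * W) * volume (Icc (-1:ℝ) 1) := setLIntegral_const _ _
        _ < ⊤ := ENNReal.mul_lt_top ENNReal.ofReal_lt_top (by rw [Real.volume_Icc]; exact ENNReal.ofReal_lt_top)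
    · simp_rw [mul_comm _ J1]
      rw [lintegral_const_mul' J1 _ hJ1fin.ne]
      refine ENNReal.mul_lt_top hJ1fin ?_
      have : ∀ v : ℝ, ENNReal.ofReal (2 * |v| ^ (-(4/5):ℝ))
          = ENNReal.ofReal 2 * ENNReal.ofReal (|v| ^ (-(4/5):ℝ)) := fun v => by
        rw [← ENNReal.ofReal_mul (by norm_num)]
      simp_rw [this]
      rw [lintegral_const_mul' _ _ ENNReal.ofReal_ne_top]
      exact ENNReal.mul_lt_top ENNReal.ofReal_lt_top (core_fin _ (by norm_num))
  have hB : (∫⁻ v in {v : ℝ | 1 < |v|}, ΦB v) < ⊤ := by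
    rw [hΦB]
    have hm1 : Measurable fun v : ℝ => ENNReal.ofReal (K * |v| ^ (-(5/4):ℝ))
        + ENNReal.ofReal (2 * W * |v| ^ (-(3/2):ℝ)) := by fun_prop
    have hm2 : Measurable fun v : ℝ => ENNReal.ofReal (K * |v| ^ (-(5/4):ℝ)) := by fun_prop
    rw [lintegral_add_left hm1, lintegral_add_left hm2]
    have htail : ∀ r : ℝ, r < -1 →
        (∫⁻ v in {v : ℝ | 1 < |v|}, ENNReal.ofReal (|v| ^ r)) < ⊤ := by
      intro r hr
      refine lt_of_le_of_lt ?_ (tail_fin r hr 1 one_pos)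
      apply lintegral_mono_set
      intro x hx
      simp only [mem_setOf_eq] at hx ⊢
      exact hx.le
    have hpull : ∀ (c : ℝ) (r : ℝ), 0 ≤ c → r < -1 →
        (∫⁻ v in {v : ℝ | 1 < |v|}, ENNReal.ofReal (c * |v| ^ r)) < ⊤ := by
      intro c r hc hr
      have : ∀ v : ℝ, ENNReal.ofReal (c * |v| ^ r)
          = ENNReal.ofReal c * ENNReal.ofReal (|v| ^ r) := fun v => by
        rw [← ENNReal.ofReal_mul hc]
      simp_rw [this]
      rw [lintegral_const_mul' _ _ ENNReal.ofReal_ne_top]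
      exact ENNReal.mul_lt_top ENNReal.ofReal_lt_top (htail r hr)
    refine ENNReal.add_lt_top.2 ⟨ENNReal.add_lt_top.2 ⟨?_, ?_⟩, ?_⟩
    · exact hpull K _ hK0 (by norm_num)
    · exact hpull (2 * W) _ (by positivity) (by norm_num)
    · simp_rw [mul_comm _ J2]
      rw [lintegral_const_mul' J2 _ hJ2fin.ne]
      exact ENNReal.mul_lt_top hJ2fin (hpull 2 _ (by norm_num) (by norm_num))
  rw [hΦ]
  rw [lintegral_add_left (hΦAm.indicator measurableSet_Icc)]
  rw [lintegral_indicator measurableSet_Icc, lintegral_indicator hsetB]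
  exact (ENNReal.add_lt_top.2 ⟨hA, hB⟩).ne


end RealPlaceAux

open MeasureTheory in
/-- The real-place density integral equals `(3/2)` times the volume of the
height-one region. -/
theorem real_place_density (a : 𝓞 K)
    (ha : ¬ IsSquare (algebraMap (𝓞 K) K a))
    (w : InfinitePlace K) (hw : w.IsReal) (α : ℝ)
    (hα : (α : ℂ) = w.embedding (algebraMap (𝓞 K) K a)) :
    volume {y : ℝ × ℝ × ℝ |
        max (max (max (max (|y.2.1 * (α * y.2.1 ^ 2 - y.2.2 ^ 2)|)
          (|y.1 * y.2.1 * y.2.2|)) (|y.1 ^ 3|)) (|y.1 * y.2.1 ^ 2|)) (|y.1 ^ 2 * y.2.1|)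
        ≤ 1} ≠ ⊤ ∧
    ∫⁻ x : ℝ × ℝ, ENNReal.ofReal (1 / (|x.2| *
        max (max (max (max (|α * x.2 ^ 2 - x.1 ^ 2|) (|x.1|)) (|x.2|⁻¹)) (|x.2|)) 1))
      = ENNReal.ofReal (3 / 2) *
        volume {y : ℝ × ℝ × ℝ |
          max (max (max (max (|y.2.1 * (α * y.2.1 ^ 2 - y.2.2 ^ 2)|)
            (|y.1 * y.2.1 * y.2.2|)) (|y.1 ^ 3|)) (|y.1 * y.2.1 ^ 2|)) (|y.1 ^ 2 * y.2.1|)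
          ≤ 1} := by
  constructor
  · rw [vol_eq α]
    exact (ENNReal.mul_lt_top ENNReal.ofReal_lt_top (I_fin α).lt_top).ne
  · rw [lhs_eq α, vol_eq α, ← mul_assoc, ← ENNReal.ofReal_mul (by norm_num : (0:ℝ) ≤ 3/2),
      show (3:ℝ)/2 * (2/3) = 1 by norm_num, ENNReal.ofReal_one, one_mul]

end ManinSplitTorsor
end
end
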